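/- arXiv:1705.10776 — 7 statements merged into one kernel-verified Lean document; each statement's English description precedes it below -/
import Mathlib

section
/- Let n, j be positive integers and l a natural number with j·l ≤ n. Then the sum, over all finitely supported functions w : ℕ → ℕ satisfying Σ_k k·w(k) = n and w(j) = l, of the products ∏_{k≥1} 1/(k^{w(k)}·w(k)!), equals (1/(j^l·l!))·Σ_{k=0}^{⌊(n−j·l)/j⌋} (−1)^k/(j^k·k!) (an identity of rational numbers). -/
open scoped Nat BigOperators

namespace Stmt0Aux

/-- weighted sum of a finsupp -/
def wsum (w : ℕ →₀ ℕ) : ℕ := w.sum fun k m => k * m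

lemma wsum_add (v u : ℕ →₀ ℕ) : wsum (v + u) = wsum v + wsum u :=
  Finsupp.sum_add_index' (fun a => by simp) (fun a b c => by ring)

lemma wsum_single (j c : ℕ) : wsum (Finsupp.single j c) = j * c :=
  Finsupp.sum_single_index (by simp)

lemma wsum_toFinsupp (s : Multiset ℕ) : wsum s.toFinsupp = s.sum := by
  induction s using Multiset.induction with
  | empty => simp [wsum]
  | cons a s ih =>
      have : (a ::ₘ s) = s + {a} := by
        rw [add_comm]; rfl
      rw [this, Multiset.toFinsupp_add, wsum_add, Multiset.toFinsupp_singleton, wsum_single,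
        Multiset.sum_add, ih, Multiset.sum_singleton]
      ring

/-- the finset of all `w` encoding partitions of `n` -/
noncomputable def TT (n : ℕ) : Finset (ℕ →₀ ℕ) :=
  (Finset.univ : Finset (Nat.Partition n)).image fun P => P.parts.toFinsupp

lemma mem_TT {n : ℕ} {w : ℕ →₀ ℕ} : w ∈ TT n ↔ w 0 = 0 ∧ wsum w = n := by
  constructor
  · rintro hw
    rcases Finset.mem_image.mp hw with ⟨P, -, rfl⟩
    constructor
    · rw [Multiset.toFinsupp_apply, Multiset.count_eq_zero]
      exact fun h0 => lt_irrefl 0 (P.parts_pos h0)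
    · rw [wsum_toFinsupp, P.parts_sum]
  · rintro ⟨h0, hs⟩
    refine Finset.mem_image.mpr ⟨⟨w.toMultiset, ?_, ?_⟩, Finset.mem_univ _, ?_⟩
    · intro i hi
      rw [Finsupp.mem_toMultiset] at hi
      rcases Nat.eq_zero_or_pos i with rfl | h
      · exact absurd h0 (Finsupp.mem_support_iff.mp hi)
      · exact h
    · rw [← wsum_toFinsupp, Finsupp.toMultiset_toFinsupp]; exact hs
    · exact Finsupp.toMultiset_toFinsupp w

end Stmt0Aux

namespace Stmt0Aux

/-- the weight of a partition -/
def FF (w : ℕ →₀ ℕ) : ℚ := ∏ k ∈ w.support, (1 : ℚ) / ((k : ℚ) ^ (w k) * ((w k)! : ℚ))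

lemma FF_mul_support (v : ℕ →₀ ℕ) (j : ℕ) (hj : 0 < j) :
    FF v * ((j : ℚ) ^ (v j) * ((v j)! : ℚ))
      = ∏ k ∈ v.support.erase j, (1 : ℚ) / ((k : ℚ) ^ (v k) * ((v k)! : ℚ)) := by
  by_cases h : j ∈ v.support
  · rw [FF, ← Finset.mul_prod_erase _ _ h]
    have hx : ((j : ℚ) ^ (v j) * ((v j)! : ℚ)) ≠ 0 := by positivity
    rw [div_mul_eq_mul_div, one_mul, mul_comm]
    exact mul_div_cancel₀ _ hx
  · rw [Finset.erase_eq_of_notMem h, Finsupp.notMem_support_iff.mp h]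
    simp [FF]

lemma FF_add_single (v : ℕ →₀ ℕ) (j c : ℕ) (hj : 0 < j) :
    FF (v + Finsupp.single j c) * ((j : ℚ) ^ (v j + c) * (((v j + c))! : ℚ))
      = FF v * ((j : ℚ) ^ (v j) * ((v j)! : ℚ)) := by
  set w := v + Finsupp.single j c with hw
  have happ : ∀ k, k ≠ j → w k = v k := by
    intro k hk
    simp [hw, Finsupp.single_apply, Ne.symm hk]
  have hjw : w j = v j + c := by simp [hw]
  have hsupp : w.support.erase j = v.support.erase j := by
    ext k
    rcases eq_or_ne k j with rfl | hk
    · simp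
    · simp [Finset.mem_erase, hk, Finsupp.mem_support_iff, happ k hk]
  calc FF w * ((j : ℚ) ^ (v j + c) * (((v j + c))! : ℚ))
      = FF w * ((j : ℚ) ^ (w j) * ((w j)! : ℚ)) := by rw [hjw]
    _ = ∏ k ∈ w.support.erase j, (1 : ℚ) / ((k : ℚ) ^ (w k) * ((w k)! : ℚ)) :=
        FF_mul_support w j hj
    _ = ∏ k ∈ v.support.erase j, (1 : ℚ) / ((k : ℚ) ^ (v k) * ((v k)! : ℚ)) := by
        rw [hsupp]
        exact Finset.prod_congr rfl fun k hk => by rw [happ k (Finset.mem_erase.mp hk).1]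
    _ = FF v * ((j : ℚ) ^ (v j) * ((v j)! : ℚ)) := (FF_mul_support v j hj).symm

end Stmt0Aux
namespace Stmt0Aux

noncomputable def PP (n : ℕ) : ℚ := ∑ w ∈ TT n, FF w

noncomputable def RR (j l n : ℕ) : ℚ := ∑ w ∈ (TT n).filter (fun w => w j = l), FF w

lemma RR_shift (j l n : ℕ) (hj : 0 < j) (hjl : j * l ≤ n) :
    RR j l n = (1 / ((j : ℚ) ^ l * (l ! : ℚ))) * RR j 0 (n - j * l) := by
  rw [RR, RR, Finset.mul_sum]
  refine Finset.sum_bij' (fun w _ => w - Finsupp.single j l)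
    (fun v _ => v + Finsupp.single j l) ?_ ?_ ?_ ?_ ?_
  · -- maps to
    intro w hw
    rw [Finset.mem_filter, mem_TT] at hw ⊢
    obtain ⟨⟨h0, hs⟩, hl⟩ := hw
    have hadd : (w - Finsupp.single j l) + Finsupp.single j l = w := by
      ext k
      rcases eq_or_ne k j with rfl | hk
      · simp [Finsupp.tsub_apply, hl]
      · simp [Finsupp.tsub_apply, Finsupp.single_apply, Ne.symm hk]
    refine ⟨⟨?_, ?_⟩, ?_⟩
    · simp [Finsupp.tsub_apply, h0]
    · have := congrArg wsum hadd
      rw [wsum_add, wsum_single, hs] at this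
      omega
    · rw [Finsupp.tsub_apply, hl, Finsupp.single_eq_same]; omega
  · intro v hv
    rw [Finset.mem_filter, mem_TT] at hv ⊢
    obtain ⟨⟨h0, hs⟩, hl⟩ := hv
    refine ⟨⟨?_, ?_⟩, ?_⟩
    · have hj0 : j ≠ 0 := hj.ne'
      simp [Finsupp.single_apply, hj0, h0]
    · rw [wsum_add, wsum_single, hs]; omega
    · simp [hl]
  · intro w hw
    rw [Finset.mem_filter] at hw
    have hl : w j = l := hw.2
    ext k
    rcases eq_or_ne k j with rfl | hk
    · simp [Finsupp.tsub_apply, hl]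
    · simp [Finsupp.tsub_apply, Finsupp.single_apply, Ne.symm hk]
  · intro v hv
    rw [Finset.mem_filter] at hv
    have hl : v j = 0 := hv.2
    ext k
    rcases eq_or_ne k j with rfl | hk
    · simp [Finsupp.tsub_apply, hl]
    · simp [Finsupp.tsub_apply, Finsupp.single_apply, Ne.symm hk]
  · intro w hw
    rw [Finset.mem_filter] at hw
    have hl : w j = l := hw.2
    set v := w - Finsupp.single j l with hv
    have hvj : v j = 0 := by rw [hv, Finsupp.tsub_apply, hl, Finsupp.single_eq_same]; omega
    have hwv : v + Finsupp.single j l = w := by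
      ext k
      rcases eq_or_ne k j with rfl | hk
      · simp [hv, Finsupp.tsub_apply, hl]
      · simp [hv, Finsupp.tsub_apply, Finsupp.single_apply, Ne.symm hk]
    have key := FF_add_single v j l hj
    rw [hvj, hwv, zero_add] at key
    have hx : ((j : ℚ) ^ l * (l ! : ℚ)) ≠ 0 := by positivity
    rw [pow_zero, Nat.factorial_zero, Nat.cast_one, mul_one, mul_one] at key
    rw [← key]
    field_simp

end Stmt0Aux
namespace Stmt0Aux

lemma support_subset_Icc {n : ℕ} {w : ℕ →₀ ℕ} (hw : w ∈ TT n) :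
    w.support ⊆ Finset.Icc 1 n := by
  rw [mem_TT] at hw
  obtain ⟨h0, hs⟩ := hw
  intro k hk
  have hk1 : 1 ≤ k := by
    rcases Nat.eq_zero_or_pos k with rfl | h
    · exact absurd h0 (Finsupp.mem_support_iff.mp hk)
    · exact h
  have hwk : 1 ≤ w k := Nat.one_le_iff_ne_zero.mpr (Finsupp.mem_support_iff.mp hk)
  have hle : k * w k ≤ n := by
    rw [← hs, wsum, Finsupp.sum]
    exact Finset.single_le_sum (f := fun k => k * w k) (fun i _ => Nat.zero_le _) hk
  refine Finset.mem_Icc.mpr ⟨hk1, le_trans ?_ hle⟩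
  calc k = k * 1 := (mul_one k).symm
    _ ≤ k * w k := Nat.mul_le_mul_left k hwk

lemma wsum_eq_sum_Icc {n : ℕ} {w : ℕ →₀ ℕ} (hw : w ∈ TT n) :
    ∑ k ∈ Finset.Icc 1 n, k * w k = n := by
  have h2 := (mem_TT.mp hw).2
  rw [wsum, Finsupp.sum] at h2
  calc ∑ k ∈ Finset.Icc 1 n, k * w k = ∑ k ∈ w.support, k * w k :=
        (Finset.sum_subset (support_subset_Icc hw) (fun k _ hk => by
          rw [Finsupp.notMem_support_iff.mp hk, mul_zero])).symm
    _ = n := h2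

lemma PP_rec (n : ℕ) : (n : ℚ) * PP n = ∑ k ∈ Finset.Icc 1 n, PP (n - k) := by
  rw [PP, Finset.mul_sum]
  have step1 : ∀ w ∈ TT n, (n : ℚ) * FF w = ∑ k ∈ Finset.Icc 1 n, (k * w k : ℚ) * FF w := by
    intro w hw
    rw [← Finset.sum_mul]
    congr 1
    have hn := wsum_eq_sum_Icc hw
    conv_lhs => rw [← hn]
    push_cast
    ring
  rw [Finset.sum_congr rfl step1, Finset.sum_comm]
  refine Finset.sum_congr rfl fun k hk => ?_
  rw [Finset.mem_Icc] at hk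
  obtain ⟨hk1, hkn⟩ := hk
  have hk0 : 0 < k := hk1
  -- restrict to w with w k ≠ 0
  rw [← Finset.sum_filter_of_ne (p := fun w => w k ≠ 0)
    (fun w _ h => by intro h0; rw [h0] at h; simp at h)]
  rw [PP]
  refine Finset.sum_bij' (fun w _ => w - Finsupp.single k 1)
    (fun v _ => v + Finsupp.single k 1) ?_ ?_ ?_ ?_ ?_
  · intro w hw
    rw [Finset.mem_filter, mem_TT] at hw
    rw [mem_TT]
    obtain ⟨⟨h0, hs⟩, hne⟩ := hw
    have hk1' : 1 ≤ w k := Nat.one_le_iff_ne_zero.mpr hne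
    have hadd : (w - Finsupp.single k 1) + Finsupp.single k 1 = w := by
      ext i
      rcases eq_or_ne i k with rfl | hik
      · simp [Finsupp.tsub_apply]; omega
      · simp [Finsupp.tsub_apply, Finsupp.single_apply, Ne.symm hik]
    constructor
    · simp [Finsupp.tsub_apply, h0]
    · have := congrArg wsum hadd
      rw [wsum_add, wsum_single, hs, mul_one] at this
      omega
  · intro v hv
    rw [mem_TT] at hv
    obtain ⟨h0, hs⟩ := hv
    rw [Finset.mem_filter, mem_TT]
    refine ⟨⟨?_, ?_⟩, ?_⟩
    · simp [Finsupp.single_apply, hk0.ne', h0]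
    · rw [wsum_add, wsum_single, hs, mul_one]; omega
    · simp
  · intro w hw
    rw [Finset.mem_filter] at hw
    have hk1' : 1 ≤ w k := Nat.one_le_iff_ne_zero.mpr hw.2
    ext i
    rcases eq_or_ne i k with rfl | hik
    · simp [Finsupp.tsub_apply]; omega
    · simp [Finsupp.tsub_apply, Finsupp.single_apply, Ne.symm hik]
  · intro v hv
    ext i
    rcases eq_or_ne i k with rfl | hik
    · simp [Finsupp.tsub_apply]
    · simp [Finsupp.tsub_apply, Finsupp.single_apply, Ne.symm hik]
  · intro w hw
    rw [Finset.mem_filter] at hw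
    have hk1' : 1 ≤ w k := Nat.one_le_iff_ne_zero.mpr hw.2
    set v := w - Finsupp.single k 1 with hv
    have hwv : v + Finsupp.single k 1 = w := by
      ext i
      rcases eq_or_ne i k with rfl | hik
      · simp [hv, Finsupp.tsub_apply]; omega
      · simp [hv, Finsupp.tsub_apply, Finsupp.single_apply, Ne.symm hik]
    have hvk : v k = w k - 1 := by rw [hv, Finsupp.tsub_apply]; simp
    have key := FF_add_single v k 1 hk0
    rw [hwv] at key
    have hwk : w k = v k + 1 := by omega
    have hx : ((k : ℚ) ^ (v k) * ((v k)! : ℚ)) ≠ 0 := by positivity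
    rw [hwk]
    push_cast
    rw [pow_succ, Nat.factorial_succ] at key
    push_cast at key
    have hk0' : ((k : ℚ)) ≠ 0 := by positivity
    have hvk1 : ((v k : ℚ) + 1) ≠ 0 := by positivity
    nlinarith [key, mul_pos (pow_pos (by exact_mod_cast hk0 : (0:ℚ) < k) (v k))
      (by exact_mod_cast (v k).factorial_pos : (0:ℚ) < (v k)!)]

lemma PP_eq_one : ∀ n : ℕ, PP n = 1 := by
  intro n
  induction n using Nat.strong_induction_on with
  | _ n ih =>
    rcases Nat.eq_zero_or_pos n with rfl | hn
    · have hTT : TT 0 = {0} := by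
        ext w
        rw [mem_TT, Finset.mem_singleton]
        constructor
        · rintro ⟨h0, hs⟩
          ext k
          by_contra hk
          have hks : k ∈ w.support := Finsupp.mem_support_iff.mpr (by simpa using hk)
          have hk1 : 1 ≤ k := by
            rcases Nat.eq_zero_or_pos k with rfl | h
            · exact absurd h0 (by simpa using hk)
            · exact h
          have : k * w k ≤ 0 := by
            rw [← hs, wsum, Finsupp.sum]
            exact Finset.single_le_sum (f := fun k => k * w k) (fun i _ => Nat.zero_le _) hks
          have hwk : 1 ≤ w k := Nat.one_le_iff_ne_zero.mpr (by simpa using hk)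
          nlinarith
        · rintro rfl
          simp [wsum]
      rw [PP, hTT]
      simp [FF]
    · have hrec := PP_rec n
      have : ∑ k ∈ Finset.Icc 1 n, PP (n - k) = n := by
        rw [Finset.sum_congr rfl (fun k hk => ih (n - k) (by
          rw [Finset.mem_Icc] at hk; omega))]
        simp [Nat.card_Icc]
      rw [this] at hrec
      have hn' : (n : ℚ) ≠ 0 := by positivity
      field_simp at hrec
      exact hrec

end Stmt0Aux
namespace Stmt0Aux

lemma PP_fiber (j n : ℕ) (hj : 0 < j) :
    PP n = ∑ l ∈ Finset.range (n / j + 1), RR j l n := by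
  rw [PP]
  rw [← Finset.sum_fiberwise_of_maps_to (g := fun w => w j) (fun w hw => ?_)]
  · rfl
  · rw [Finset.mem_range, Nat.lt_succ_iff, Nat.le_div_iff_mul_le hj]
    rcases Nat.eq_zero_or_pos (w j) with h0 | hpos
    · simp [h0]
    · have hjs : j ∈ w.support := Finsupp.mem_support_iff.mpr hpos.ne'
      have := (mem_TT.mp hw).2
      rw [wsum, Finsupp.sum] at this
      calc w j * j = j * w j := mul_comm _ _
        _ ≤ ∑ k ∈ w.support, k * w k :=
            Finset.single_le_sum (f := fun k => k * w k) (fun i _ => Nat.zero_le _) hjs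
        _ = n := this

lemma diag (j : ℕ) (hj : 0 < j) (s : ℕ) (hs : 0 < s) :
    ∑ l ∈ Finset.range (s + 1),
      (1 / ((j : ℚ) ^ l * (l ! : ℚ))) * ((-1 : ℚ) ^ (s - l) / ((j : ℚ) ^ (s - l) * ((s - l)! : ℚ)))
      = 0 := by
  have step : ∀ l ∈ Finset.range (s + 1),
      (1 / ((j : ℚ) ^ l * (l ! : ℚ))) * ((-1 : ℚ) ^ (s - l) / ((j : ℚ) ^ (s - l) * ((s - l)! : ℚ)))
      = ((-1 : ℚ) ^ (s - l) * (s.choose l : ℚ)) / ((j : ℚ) ^ s * (s ! : ℚ)) := by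
    intro l hl
    rw [Finset.mem_range, Nat.lt_succ_iff] at hl
    have hfact : (s.choose l : ℚ) * (l ! : ℚ) * ((s - l)! : ℚ) = (s ! : ℚ) := by
      exact_mod_cast congrArg (Nat.cast (R := ℚ)) (Nat.choose_mul_factorial_mul_factorial hl)
    have hpow : (j : ℚ) ^ l * (j : ℚ) ^ (s - l) = (j : ℚ) ^ s := by
      rw [← pow_add]; congr 1; omega
    have h1 : ((l)! : ℚ) ≠ 0 := by positivity
    have h2 : (((s - l))! : ℚ) ≠ 0 := by positivity
    have h3 : ((j : ℚ)) ≠ 0 := by positivity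
    field_simp
    rw [← hfact, ← hpow]
    ring
  rw [Finset.sum_congr rfl step, ← Finset.sum_div]
  have : ∑ l ∈ Finset.range (s + 1), (-1 : ℚ) ^ (s - l) * (s.choose l : ℚ) = 0 := by
    have h := Int.alternating_sum_range_choose_of_ne (n := s) hs.ne'
    have hq : ((∑ i ∈ Finset.range (s + 1), (-1 : ℤ) ^ i * (s.choose i : ℤ) : ℤ) : ℚ) = 0 := by
      rw [h]; rfl
    push_cast at hq
    rw [← hq, ← Finset.sum_range_reflect]
    refine Finset.sum_congr rfl fun i hi => ?_
    rw [Finset.mem_range, Nat.lt_succ_iff] at hi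
    simp only [Nat.add_sub_cancel]
    have : s - (s - i) = i := by omega
    rw [this, Nat.choose_symm hi]
  rw [this, zero_div]

lemma HH (j : ℕ) (L : ℕ) (hj : 0 < j) :
    ∑ l ∈ Finset.range (L + 1), (1 / ((j : ℚ) ^ l * (l ! : ℚ))) *
      (∑ k ∈ Finset.range (L - l + 1), (-1 : ℚ) ^ k / ((j : ℚ) ^ k * (k ! : ℚ))) = 1 := by
  induction L with
  | zero => norm_num
  | succ L ih =>
    rw [Finset.sum_range_succ]
    have hstep : ∀ l ∈ Finset.range (L + 1),
        (1 / ((j : ℚ) ^ l * (l ! : ℚ))) *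
          (∑ k ∈ Finset.range (L + 1 - l + 1), (-1 : ℚ) ^ k / ((j : ℚ) ^ k * (k ! : ℚ)))
        = (1 / ((j : ℚ) ^ l * (l ! : ℚ))) *
            (∑ k ∈ Finset.range (L - l + 1), (-1 : ℚ) ^ k / ((j : ℚ) ^ k * (k ! : ℚ)))
          + (1 / ((j : ℚ) ^ l * (l ! : ℚ))) *
            ((-1 : ℚ) ^ (L + 1 - l) / ((j : ℚ) ^ (L + 1 - l) * (((L + 1 - l))! : ℚ))) := by
      intro l hl
      rw [Finset.mem_range, Nat.lt_succ_iff] at hl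
      have h1 : L + 1 - l = (L - l) + 1 := by omega
      rw [h1, Finset.sum_range_succ, mul_add, ← h1]
    rw [Finset.sum_congr rfl hstep, Finset.sum_add_distrib, ih]
    have hd := diag j hj (L + 1) (Nat.succ_pos L)
    rw [Finset.sum_range_succ] at hd
    have h0 : L + 1 - (L + 1) = 0 := by omega
    rw [h0] at hd
    norm_num at hd ⊢
    linarith

end Stmt0Aux
namespace Stmt0Aux

lemma QQ_formula (j : ℕ) (hj : 0 < j) :
    ∀ m : ℕ, RR j 0 m = ∑ k ∈ Finset.range (m / j + 1), (-1 : ℚ) ^ k / ((j : ℚ) ^ k * (k ! : ℚ)) := by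
  intro m
  induction m using Nat.strong_induction_on with
  | _ m ih =>
    have hP := PP_eq_one m
    rw [PP_fiber j m hj] at hP
    set L := m / j with hL
    have hshift : ∀ l ∈ Finset.range (L + 1),
        RR j l m = (1 / ((j : ℚ) ^ l * (l ! : ℚ))) * RR j 0 (m - j * l) := by
      intro l hl
      rw [Finset.mem_range, Nat.lt_succ_iff] at hl
      refine RR_shift j l m hj ?_
      rw [mul_comm]
      exact (Nat.le_div_iff_mul_le hj).mp hl
    rw [Finset.sum_congr rfl hshift, Finset.sum_range_succ'] at hP
    simp only [pow_zero, Nat.factorial_zero, Nat.cast_one, mul_one, Nat.mul_zero, Nat.sub_zero,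
      one_mul, ne_eq, div_one] at hP
    have hIH : ∀ i ∈ Finset.range L,
        (1 / ((j : ℚ) ^ (i + 1) * ((i + 1)! : ℚ))) * RR j 0 (m - j * (i + 1))
        = (1 / ((j : ℚ) ^ (i + 1) * ((i + 1)! : ℚ))) *
            ∑ k ∈ Finset.range (L - (i + 1) + 1), (-1 : ℚ) ^ k / ((j : ℚ) ^ k * (k ! : ℚ)) := by
      intro i hi
      rw [Finset.mem_range] at hi
      have hle : j * (i + 1) ≤ m := by
        rw [mul_comm]
        exact (Nat.le_div_iff_mul_le hj).mp (by omega)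
      have hpos : 1 ≤ j * (i + 1) := Nat.one_le_iff_ne_zero.mpr (by positivity)
      have hlt : m - j * (i + 1) < m := by omega
      have hdiv : (m - j * (i + 1)) / j = L - (i + 1) := by
        rw [hL, Nat.sub_mul_div m j (i + 1)]
      rw [ih _ hlt, hdiv]
    rw [Finset.sum_congr rfl hIH] at hP
    have hHH := HH j L hj
    rw [Finset.sum_range_succ'] at hHH
    simp only [pow_zero, Nat.factorial_zero, Nat.cast_one, mul_one, Nat.sub_zero, one_mul] at hHH
    linarith

end Stmt0Aux


/-- For positive integers `n`, `j` and a natural number `l` with `j·l ≤ n`, the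
sum over all finitely supported functions `w : ℕ → ℕ` (supported on positive integers)
with `∑ k, k·w k = n` and `w j = l` of `∏_{k≥1} 1/(k^{w k}·(w k)!)` equals
`(1/(j^l·l!))·∑_{k=0}^{⌊(n−j·l)/j⌋} (−1)^k/(j^k·k!)`, as rational numbers. -/
theorem stmt0 (n j l : ℕ) (hn : 0 < n) (hj : 0 < j) (hjl : j * l ≤ n) :
    (∑ᶠ (w : ℕ →₀ ℕ) (_ : w 0 = 0 ∧ (w.sum fun k m => k * m) = n ∧ w j = l),
      ∏ k ∈ w.support, (1 : ℚ) / ((k : ℚ) ^ (w k) * ((w k)! : ℚ)))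
    = (1 / ((j : ℚ) ^ l * (l ! : ℚ))) *
      ∑ k ∈ Finset.range ((n - j * l) / j + 1), (-1 : ℚ) ^ k / ((j : ℚ) ^ k * (k ! : ℚ)) := by
  have heq : (∑ᶠ (w : ℕ →₀ ℕ) (_ : w 0 = 0 ∧ (w.sum fun k m => k * m) = n ∧ w j = l),
      ∏ k ∈ w.support, (1 : ℚ) / ((k : ℚ) ^ (w k) * ((w k)! : ℚ))) = Stmt0Aux.RR j l n := by
    rw [Stmt0Aux.RR]
    refine finsum_cond_eq_sum_of_cond_iff _ ?_
    intro w _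
    simp only [Finset.mem_filter, Stmt0Aux.mem_TT, Stmt0Aux.wsum]
    tauto
  rw [heq, Stmt0Aux.RR_shift j l n hj hjl, Stmt0Aux.QQ_formula j hj (n - j * l)]
end

section
/- Let x : ℕ → ℝ be a probability distribution on the natural numbers: x_l ≥ 0 for all l, Σ_{l=0}^∞ x_l = 1 (summable), and suppose the mean μ := Σ_{l=0}^∞ l·x_l exists (the series is summable) with μ > 0, and that the series Σ_{l=0}^∞ x_l·log(x_l) is summable. Then the Shannon entropy satisfies −Σ_{l=0}^∞ x_l·log(x_l) ≤ (μ+1)·log(μ+1) − μ·log(μ). -/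
open scoped BigOperators

/-- A probability distribution `x` on `ℕ` with mean `μ > 0` and summable
entropy series has Shannon entropy at most `(μ+1)·log(μ+1) − μ·log μ`. -/
theorem stmt2 (x : ℕ → ℝ) (hx : ∀ l, 0 ≤ x l) (hsum : Summable x)
    (htot : ∑' l : ℕ, x l = 1) (μ : ℝ)
    (hμsum : Summable fun l : ℕ => (l : ℝ) * x l)
    (hμ : ∑' l : ℕ, (l : ℝ) * x l = μ) (hμpos : 0 < μ)
    (hent : Summable fun l : ℕ => x l * Real.log (x l)) :
    -∑' l : ℕ, x l * Real.log (x l) ≤ (μ + 1) * Real.log (μ + 1) - μ * Real.log μ := by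
  have hμ1 : (0:ℝ) < μ + 1 := by linarith
  set r : ℝ := μ / (μ + 1) with hr
  have hr0 : 0 < r := div_pos hμpos hμ1
  have hr1 : r < 1 := by rw [hr, div_lt_one hμ1]; linarith
  set q : ℕ → ℝ := fun l => (1/(μ+1)) * r ^ l with hq
  have hq0 : ∀ l, 0 < q l := fun l => mul_pos (by positivity) (pow_pos hr0 l)
  have hqsum : Summable q := (summable_geometric_of_lt_one hr0.le hr1).mul_left _
  have hqtot : ∑' l, q l = 1 := by
    rw [hq, tsum_mul_left, tsum_geometric_of_lt_one hr0.le hr1, hr]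
    field_simp
    ring
  have hlogq : ∀ l : ℕ, Real.log (q l) = -Real.log (μ+1) + l * Real.log r := by
    intro l
    have : q l = 1/(μ+1) * r ^ l := rfl
    rw [this, Real.log_mul (by positivity) (pow_ne_zero _ hr0.ne'), Real.log_pow, one_div,
      Real.log_inv]
  have hxlogq : Summable (fun l => x l * Real.log (q l)) := by
    have heq : (fun l : ℕ => x l * Real.log (q l))
        = fun l => (-Real.log (μ+1)) * x l + Real.log r * ((l:ℝ) * x l) := by
      funext l; rw [hlogq l]; ring
    rw [heq]
    exact (hsum.mul_left _).add (hμsum.mul_left _)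
  have hxlogq_tsum : ∑' l, x l * Real.log (q l)
      = μ * Real.log μ - (μ + 1) * Real.log (μ + 1) := by
    have heq : (fun l : ℕ => x l * Real.log (q l))
        = fun l => (-Real.log (μ+1)) * x l + Real.log r * ((l:ℝ) * x l) := by
      funext l; rw [hlogq l]; ring
    rw [heq, Summable.tsum_add (hsum.mul_left _) (hμsum.mul_left _),
      tsum_mul_left, tsum_mul_left, htot, hμ, hr,
      Real.log_div hμpos.ne' hμ1.ne']
    ring
  -- pointwise Gibbs inequality
  have hpt : ∀ l : ℕ, x l - q l ≤ x l * Real.log (x l) - x l * Real.log (q l) := by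
    intro l
    rcases eq_or_lt_of_le (hx l) with h0 | hxl
    · rw [← h0]
      simp
      linarith [(hq0 l).le]
    · have hlog : Real.log (q l / x l) ≤ q l / x l - 1 :=
        Real.log_le_sub_one_of_pos (div_pos (hq0 l) hxl)
      have := mul_le_mul_of_nonneg_left hlog hxl.le
      rw [Real.log_div (hq0 l).ne' hxl.ne', mul_sub, mul_sub,
        mul_div_cancel₀ _ hxl.ne'] at this
      linarith
  have hgibbs : ∑' l, (x l - q l) ≤ ∑' l, (x l * Real.log (x l) - x l * Real.log (q l)) :=
    Summable.tsum_le_tsum hpt (hsum.sub hqsum) (hent.sub hxlogq)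
  rw [Summable.tsum_sub hsum hqsum, Summable.tsum_sub hent hxlogq, htot, hqtot,
    hxlogq_tsum] at hgibbs
  linarith
end

section
/- Let j be a positive integer and define the Poisson probabilities p_l := e^{−1/j}/(l!·j^l) for l ∈ ℕ. Then the Rényi entropies converge to the von Neumann entropy as q → 1 from above: the function q ↦ (1/(1−q))·log(Σ_{l=0}^∞ p_l^q) tends, as q → 1⁺ (within (1,∞)), to −Σ_{l=0}^∞ p_l·log(p_l) = 1/j + e^{−1/j}·Σ_{l=0}^∞ log(l!·j^l)/(l!·j^l). -/
open scoped Nat BigOperators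

open Filter Real Set

lemma aux_sqrt_fact : Summable (fun l : ℕ => (Real.sqrt l !)⁻¹) := by
  apply summable_of_ratio_norm_eventually_le (r := (Real.sqrt 2)⁻¹)
  · rw [inv_lt_one_iff₀]
    right
    rw [show (1:ℝ) = Real.sqrt 1 by simp]
    exact Real.sqrt_lt_sqrt (by norm_num) (by norm_num)
  · filter_upwards [eventually_ge_atTop 1] with l hl
    have h1 : (0:ℝ) < Real.sqrt l ! := Real.sqrt_pos.2 (by positivity)
    have h2 : ((l+1)! : ℝ) = (l+1) * l ! := by
      push_cast [Nat.factorial_succ]; ring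
    rw [norm_inv, norm_inv, Real.norm_eq_abs, Real.norm_eq_abs,
      abs_of_nonneg (Real.sqrt_nonneg _), abs_of_nonneg (Real.sqrt_nonneg _), h2,
      Real.sqrt_mul (by positivity), mul_inv]
    have h3 : (Real.sqrt ((l:ℝ)+1))⁻¹ ≤ (Real.sqrt 2)⁻¹ := by
      rw [inv_le_inv₀ (Real.sqrt_pos.2 (by positivity)) (Real.sqrt_pos.2 (by norm_num))]
      apply Real.sqrt_le_sqrt
      have : (1:ℝ) ≤ l := by exact_mod_cast hl
      linarith
    have h4 : (0:ℝ) ≤ (Real.sqrt l !)⁻¹ := by positivity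
    calc (Real.sqrt ((l:ℝ)+1))⁻¹ * (Real.sqrt l !)⁻¹
        ≤ (Real.sqrt 2)⁻¹ * (Real.sqrt l !)⁻¹ := by gcongr
      _ = (Real.sqrt 2)⁻¹ * (Real.sqrt l !)⁻¹ := rfl

lemma aux_log_div_summable {a : ℕ → ℝ} (h1 : ∀ l, 1 ≤ a l) (h2 : ∀ l, (l ! : ℝ) ≤ a l) :
    Summable (fun l => Real.log (a l) / a l) := by
  have ha : ∀ l, (0:ℝ) < a l := fun l => lt_of_lt_of_le one_pos (h1 l)
  apply Summable.of_nonneg_of_le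
    (fun l => div_nonneg (Real.log_nonneg (h1 l)) (ha l).le)
    (fun l => ?_) (aux_sqrt_fact.mul_left 2)
  have hfl : (0:ℝ) < (l ! : ℝ) := by positivity
  have hsa : (0:ℝ) < Real.sqrt (a l) := Real.sqrt_pos.2 (ha l)
  have hla : Real.log (a l) ≤ 2 * Real.sqrt (a l) := by
    have h := Real.log_le_sub_one_of_pos hsa
    rw [Real.log_sqrt (ha l).le] at h
    nlinarith [Real.sqrt_nonneg (a l)]
  calc Real.log (a l) / a l ≤ 2 * Real.sqrt (a l) / a l := by gcongr; exact (ha l).le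
    _ = 2 * (Real.sqrt (a l))⁻¹ := by
        rw [← Real.mul_self_sqrt (ha l).le]; field_simp; rw [Real.sqrt_sq hsa.le]
    _ ≤ 2 * (Real.sqrt (l !))⁻¹ := by
        gcongr
        exact h2 l

lemma renyi_limit {p : ℕ → ℝ} (hpos : ∀ l, 0 < p l) (hlt : ∀ l, p l < 1)
    (hsum : Summable p) (htot : ∑' l, p l = 1)
    (hsl : Summable (fun l => p l * Real.log (p l))) :
    Filter.Tendsto (fun q : ℝ => (1/(1-q)) * Real.log (∑' l, p l ^ q))
      (nhdsWithin 1 (Set.Ioi 1)) (nhds (-∑' l, p l * Real.log (p l))) := by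
  have hSq : ∀ q : ℝ, 1 ≤ q → Summable (fun l => p l ^ q) := by
    intro q hq
    refine Summable.of_nonneg_of_le (fun l => (Real.rpow_pos_of_pos (hpos l) q).le)
      (fun l => ?_) hsum
    calc p l ^ q ≤ p l ^ (1:ℝ) :=
          Real.rpow_le_rpow_of_exponent_ge (hpos l) (hlt l).le hq
      _ = p l := Real.rpow_one _
  -- Step A: dominated convergence for the difference quotient
  have hA : Tendsto (fun q : ℝ => ∑' l, (p l ^ q - p l) / (q - 1))
      (nhdsWithin 1 (Set.Ioi 1)) (nhds (∑' l, p l * Real.log (p l))) := by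
    apply tendsto_tsum_of_dominated_convergence
      (bound := fun l => -(p l * Real.log (p l)))
    · exact hsl.neg
    · intro l
      have hd : HasDerivAt (fun q : ℝ => p l ^ q) (p l ^ (1:ℝ) * Real.log (p l)) 1 :=
        (Real.hasStrictDerivAt_const_rpow (hpos l) 1).hasDerivAt
      have h2 := hasDerivAt_iff_tendsto_slope.1 hd
      have hsl_eq : slope (fun q : ℝ => p l ^ q) 1 = fun q => (p l ^ q - p l) / (q - 1) := by
        funext q
        rw [slope_def_field, Real.rpow_one]
      rw [hsl_eq, Real.rpow_one] at h2
      exact h2.mono_left (nhdsWithin_mono 1 (fun y hy => ne_of_gt hy))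
    · filter_upwards [self_mem_nhdsWithin] with q hq l
      have hq1 : (1:ℝ) < q := hq
      have hc : Real.log (p l) < 0 := Real.log_neg (hpos l) (hlt l)
      have hple : p l ^ q ≤ p l := by
        calc p l ^ q ≤ p l ^ (1:ℝ) :=
              Real.rpow_le_rpow_of_exponent_ge (hpos l) (hlt l).le hq1.le
          _ = p l := Real.rpow_one _
      have hexp : p l * Real.exp ((q - 1) * Real.log (p l)) = p l ^ q := by
        rw [Real.rpow_def_of_pos (hpos l)]
        nth_rewrite 1 [← Real.exp_log (hpos l)]
        rw [← Real.exp_add]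
        congr 1
        ring
      have key : p l - p l ^ q ≤ (q - 1) * (-(p l * Real.log (p l))) := by
        have h5 : 1 - Real.exp ((q - 1) * Real.log (p l)) ≤ -((q - 1) * Real.log (p l)) := by
          linarith [Real.add_one_le_exp ((q - 1) * Real.log (p l))]
        have h6 := mul_le_mul_of_nonneg_left h5 (hpos l).le
        nlinarith [hexp]
      rw [Real.norm_eq_abs, abs_div, abs_of_pos (by linarith : (0:ℝ) < q - 1),
        abs_of_nonpos (by linarith : p l ^ q - p l ≤ 0),
        div_le_iff₀ (by linarith : (0:ℝ) < q - 1)]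
      nlinarith [key]
  -- rewrite the difference quotient
  have hD : Tendsto (fun q : ℝ => ((∑' l, p l ^ q) - 1) / (q - 1))
      (nhdsWithin 1 (Set.Ioi 1)) (nhds (∑' l, p l * Real.log (p l))) := by
    apply hA.congr'
    filter_upwards [self_mem_nhdsWithin] with q hq
    have hq1 : (1:ℝ) < q := hq
    rw [tsum_div_const, Summable.tsum_sub (hSq q hq1.le) hsum, htot]
  -- S q → 1
  have hS1 : Tendsto (fun q : ℝ => ∑' l, p l ^ q) (nhdsWithin 1 (Set.Ioi 1)) (nhds 1) := by
    have h0 : Tendsto (fun q : ℝ => q - 1) (nhdsWithin 1 (Set.Ioi 1)) (nhds 0) := by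
      have h : Tendsto (fun q : ℝ => q - 1) (nhds 1) (nhds (1 - 1)) :=
        (continuous_id.sub continuous_const).tendsto 1
      rw [sub_self] at h
      exact h.mono_left nhdsWithin_le_nhds
    have hmul := h0.mul hD
    have h1 : Tendsto (fun q : ℝ => 1 + (q - 1) * (((∑' l, p l ^ q) - 1) / (q - 1)))
        (nhdsWithin 1 (Set.Ioi 1)) (nhds 1) := by
      simpa using tendsto_const_nhds.add hmul
    apply h1.congr'
    filter_upwards [self_mem_nhdsWithin] with q hq
    have hq1 : (1:ℝ) < q := hq
    have hne : q - 1 ≠ 0 := by linarith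
    field_simp
    ring
  -- S q < 1 strictly
  have hSlt : ∀ q : ℝ, 1 < q → (∑' l, p l ^ q) < 1 := by
    intro q hq
    rw [← htot]
    apply Summable.tsum_lt_tsum_of_nonneg (i := 0)
      (fun l => (Real.rpow_pos_of_pos (hpos l) q).le)
      (fun l => by
        calc p l ^ q ≤ p l ^ (1:ℝ) :=
              Real.rpow_le_rpow_of_exponent_ge (hpos l) (hlt l).le hq.le
          _ = p l := Real.rpow_one _)
      (by
        calc p 0 ^ q < p 0 ^ (1:ℝ) :=
              Real.rpow_lt_rpow_of_exponent_gt (hpos 0) (hlt 0) hq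
          _ = p 0 := Real.rpow_one _)
      hsum
  -- log y / (y-1) → 1
  have hlog1 : Tendsto (fun y : ℝ => Real.log y / (y - 1)) (nhdsWithin 1 {(1:ℝ)}ᶜ) (nhds 1) := by
    have hd : HasDerivAt Real.log 1 1 := by simpa using Real.hasDerivAt_log one_ne_zero
    have h2 := hasDerivAt_iff_tendsto_slope.1 hd
    have heq : slope Real.log 1 = fun y => Real.log y / (y - 1) := by
      funext y
      rw [slope_def_field, Real.log_one, sub_zero]
    rwa [heq] at h2
  have hScomp : Tendsto (fun q : ℝ => ∑' l, p l ^ q)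
      (nhdsWithin 1 (Set.Ioi 1)) (nhdsWithin 1 {(1:ℝ)}ᶜ) := by
    rw [tendsto_nhdsWithin_iff]
    refine ⟨hS1, ?_⟩
    filter_upwards [self_mem_nhdsWithin] with q hq
    exact ne_of_lt (hSlt q hq)
  have hfinal := (hD.neg).mul (hlog1.comp hScomp)
  rw [mul_one] at hfinal
  apply hfinal.congr'
  filter_upwards [self_mem_nhdsWithin] with q hq
  have hq1 : (1:ℝ) < q := hq
  have hne : q - 1 ≠ 0 := by intro h; rw [sub_eq_zero] at h; exact (ne_of_gt hq1) h
  have hne2 : 1 - q ≠ 0 := by intro h; rw [sub_eq_zero] at h; exact (ne_of_gt hq1) h.symm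
  have hSne : (∑' l, p l ^ q) - 1 ≠ 0 := sub_ne_zero.2 (ne_of_lt (hSlt q hq1))
  simp only [Function.comp]
  field_simp
  ring
/-- For the Poisson probabilities `p_l = e^{−1/j}/(l!·j^l)`, the Rényi entropy
`q ↦ (1/(1−q))·log(∑ p_l^q)` tends, as `q → 1⁺`, to the von Neumann entropy
`−∑ p_l·log p_l = 1/j + e^{−1/j}·∑ log(l!·j^l)/(l!·j^l)`. -/
theorem stmt5 (j : ℕ) (hj : 0 < j) :
    Filter.Tendsto
      (fun q : ℝ =>
        (1 / (1 - q)) *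
          Real.log (∑' l : ℕ, (Real.exp (-1 / (j : ℝ)) / ((l ! : ℝ) * (j : ℝ) ^ l)) ^ q))
      (nhdsWithin 1 (Set.Ioi 1))
      (nhds (-∑' l : ℕ,
        (Real.exp (-1 / (j : ℝ)) / ((l ! : ℝ) * (j : ℝ) ^ l)) *
          Real.log (Real.exp (-1 / (j : ℝ)) / ((l ! : ℝ) * (j : ℝ) ^ l)))) ∧
    (-∑' l : ℕ,
        (Real.exp (-1 / (j : ℝ)) / ((l ! : ℝ) * (j : ℝ) ^ l)) *
          Real.log (Real.exp (-1 / (j : ℝ)) / ((l ! : ℝ) * (j : ℝ) ^ l))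
      = 1 / (j : ℝ) +
        Real.exp (-1 / (j : ℝ)) *
          ∑' l : ℕ, Real.log ((l ! : ℝ) * (j : ℝ) ^ l) / ((l ! : ℝ) * (j : ℝ) ^ l)) := by
  have hj1 : (1:ℝ) ≤ (j:ℝ) := by exact_mod_cast hj
  have hjpos : (0:ℝ) < (j:ℝ) := by positivity
  have ha1 : ∀ l : ℕ, (1:ℝ) ≤ (l ! : ℝ) * (j:ℝ) ^ l := by
    intro l
    have h1 : (1:ℝ) ≤ (l ! : ℝ) := by exact_mod_cast Nat.one_le_iff_ne_zero.2 (Nat.factorial_ne_zero l)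
    have h2 : (1:ℝ) ≤ (j:ℝ) ^ l := one_le_pow₀ hj1
    nlinarith
  have hapos : ∀ l : ℕ, (0:ℝ) < (l ! : ℝ) * (j:ℝ) ^ l := fun l => lt_of_lt_of_le one_pos (ha1 l)
  have hexplt : Real.exp (-1 / (j:ℝ)) < 1 := by
    rw [Real.exp_lt_one_iff]
    rw [neg_div]
    simp only [neg_neg, Left.neg_neg_iff]
    positivity
  have hpos : ∀ l : ℕ, (0:ℝ) < Real.exp (-1 / (j:ℝ)) / ((l ! : ℝ) * (j:ℝ) ^ l) := by
    intro l; positivity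
  have hlt : ∀ l : ℕ, Real.exp (-1 / (j:ℝ)) / ((l ! : ℝ) * (j:ℝ) ^ l) < 1 := by
    intro l
    rw [div_lt_one (hapos l)]
    exact lt_of_lt_of_le hexplt (ha1 l)
  have heq : ∀ l : ℕ, Real.exp (-1 / (j:ℝ)) / ((l ! : ℝ) * (j:ℝ) ^ l)
      = Real.exp (-1 / (j:ℝ)) * ((1/(j:ℝ)) ^ l / (l ! : ℝ)) := by
    intro l
    rw [div_pow, one_pow]
    have h1 : ((l !:ℝ)) ≠ 0 := by positivity
    have h2 : ((j:ℝ)) ^ l ≠ 0 := by positivity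
    field_simp
  have hsum : Summable (fun l : ℕ => Real.exp (-1 / (j:ℝ)) / ((l ! : ℝ) * (j:ℝ) ^ l)) := by
    apply Summable.congr (((Real.summable_pow_div_factorial (1/(j:ℝ))).mul_left
      (Real.exp (-1 / (j:ℝ))))) (fun l => (heq l).symm)
  have hexptsum : ∑' l : ℕ, ((1/(j:ℝ)) ^ l / (l ! : ℝ)) = Real.exp (1/(j:ℝ)) := by
    rw [Real.exp_eq_exp_ℝ, NormedSpace.exp_eq_tsum_div]
  have htot : ∑' l : ℕ, Real.exp (-1 / (j:ℝ)) / ((l ! : ℝ) * (j:ℝ) ^ l) = 1 := by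
    rw [tsum_congr heq, tsum_mul_left, hexptsum, ← Real.exp_add]
    rw [show -1/(j:ℝ) + 1/(j:ℝ) = 0 by ring, Real.exp_zero]
  have hlogp : ∀ l : ℕ, Real.log (Real.exp (-1 / (j:ℝ)) / ((l ! : ℝ) * (j:ℝ) ^ l))
      = -1/(j:ℝ) - Real.log ((l ! : ℝ) * (j:ℝ) ^ l) := by
    intro l
    rw [Real.log_div (Real.exp_ne_zero _) (ne_of_gt (hapos l)), Real.log_exp]
  have hfle : ∀ l : ℕ, (l ! : ℝ) ≤ (l ! : ℝ) * (j:ℝ) ^ l := by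
    intro l
    nth_rewrite 1 [← mul_one ((l !:ℝ))]
    have : (0:ℝ) ≤ (l !:ℝ) := by positivity
    exact mul_le_mul_of_nonneg_left (one_le_pow₀ hj1) this
  have hlogsum : Summable (fun l : ℕ => Real.log ((l ! : ℝ) * (j:ℝ) ^ l) / ((l ! : ℝ) * (j:ℝ) ^ l)) :=
    aux_log_div_summable ha1 hfle
  have hsl : Summable (fun l : ℕ => (Real.exp (-1 / (j:ℝ)) / ((l ! : ℝ) * (j:ℝ) ^ l)) *
      Real.log (Real.exp (-1 / (j:ℝ)) / ((l ! : ℝ) * (j:ℝ) ^ l))) := by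
    apply Summable.congr ((hsum.mul_left (-1/(j:ℝ))).sub
      ((hlogsum.mul_left (Real.exp (-1/(j:ℝ))))))
    intro l
    rw [hlogp l]
    have h2 : ((l !:ℝ) * (j:ℝ)^l) ≠ 0 := ne_of_gt (hapos l)
    field_simp
  constructor
  · exact renyi_limit hpos hlt hsum htot hsl
  · have h2 : (-∑' l : ℕ,
        (Real.exp (-1 / (j : ℝ)) / ((l ! : ℝ) * (j : ℝ) ^ l)) *
          Real.log (Real.exp (-1 / (j : ℝ)) / ((l ! : ℝ) * (j : ℝ) ^ l)))
        = ∑' l : ℕ, ((1/(j:ℝ)) * (Real.exp (-1 / (j:ℝ)) / ((l ! : ℝ) * (j:ℝ) ^ l))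
            + Real.exp (-1/(j:ℝ)) * (Real.log ((l ! : ℝ) * (j:ℝ) ^ l) / ((l ! : ℝ) * (j:ℝ) ^ l))) := by
      rw [← tsum_neg]
      apply tsum_congr
      intro l
      rw [hlogp l]
      have h3 : ((l !:ℝ) * (j:ℝ)^l) ≠ 0 := ne_of_gt (hapos l)
      field_simp
      ring
    rw [h2, Summable.tsum_add (hsum.mul_left (1/(j:ℝ))) (hlogsum.mul_left (Real.exp (-1/(j:ℝ)))),
      tsum_mul_left, tsum_mul_left, htot, mul_one]
end

section
/- Fix a positive integer j. For each n ≥ j define p_l(n) := (1/(l!·j^l))·Σ_{k=0}^{⌊(n−j·l)/j⌋} (−1)^k/(j^k·k!) for 0 ≤ l ≤ ⌊n/j⌋. Then the finite entropies s_j(n) := −Σ_{l=0}^{⌊n/j⌋} p_l(n)·log(p_l(n)) converge, as n → ∞, to s_j := 1/j + e^{−1/j}·Σ_{l=0}^∞ log(l!·j^l)/(l!·j^l). -/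
open scoped Nat BigOperators
open Filter Real

private lemma sqrt_pow_aux (x : ℝ) (hx : 0 ≤ x) : ∀ l : ℕ, Real.sqrt (x ^ l) = (Real.sqrt x) ^ l := by
  intro l
  induction l with
  | zero => simp
  | succ n ih => rw [pow_succ, pow_succ, Real.sqrt_mul (pow_nonneg hx n), ih]

private lemma neg_mul_log_le (u : ℝ) (h0 : 0 < u) : -(u * Real.log u) ≤ 2 * Real.sqrt u := by
  have hs : 0 < Real.sqrt u := Real.sqrt_pos.2 h0
  have h1 : -Real.log u ≤ 2 / Real.sqrt u := by
    have : Real.log u = 2 * Real.log (Real.sqrt u) := by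
      rw [Real.log_sqrt h0.le]; ring
    rw [this]
    have h2 : Real.log (Real.sqrt u)⁻¹ ≤ (Real.sqrt u)⁻¹ - 1 :=
      Real.log_le_sub_one_of_pos (inv_pos.2 hs)
    rw [Real.log_inv] at h2
    rw [div_eq_mul_inv]
    nlinarith [inv_pos.2 hs]
  calc -(u * Real.log u) = u * (-Real.log u) := by ring
    _ ≤ u * (2 / Real.sqrt u) := by
        exact mul_le_mul_of_nonneg_left h1 h0.le
    _ = 2 * (u / Real.sqrt u) := by ring
    _ = 2 * Real.sqrt u := by rw [Real.div_sqrt]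

private lemma abs_mul_log_le (t : ℝ) : |t * Real.log t| ≤ 2 * Real.sqrt |t| + t ^ 2 := by
  rcases eq_or_ne t 0 with rfl | ht
  · simp
  have h0 : 0 < |t| := abs_pos.2 ht
  have hlog : Real.log t = Real.log |t| := (Real.log_abs t).symm
  rw [hlog, abs_mul]
  rcases le_or_gt |t| 1 with h1 | h1
  · have hle : Real.log |t| ≤ 0 := Real.log_nonpos (abs_nonneg t) h1
    have habs : abs (Real.log (abs t)) = -Real.log (abs t) := abs_of_nonpos hle
    rw [habs]
    have := neg_mul_log_le |t| h0
    nlinarith [sq_nonneg t]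
  · have hle : 0 ≤ Real.log |t| := Real.log_nonneg h1.le
    have habs : abs (Real.log (abs t)) = Real.log (abs t) := abs_of_nonneg hle
    rw [habs]
    have h2 : Real.log |t| ≤ |t| - 1 := Real.log_le_sub_one_of_pos h0
    have h3 : |t| * Real.log |t| ≤ |t| * (|t| - 1) :=
      mul_le_mul_of_nonneg_left h2 (abs_nonneg t)
    have h4 : |t| * |t| = t ^ 2 := by rw [abs_mul_abs_self t]; ring
    nlinarith [Real.sqrt_nonneg |t|, abs_nonneg t]

private lemma log_le_two_sqrt (u : ℝ) (hu : 1 ≤ u) : Real.log u ≤ 2 * Real.sqrt u := by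
  have h0 : 0 < u := lt_of_lt_of_le one_pos hu
  have : Real.log u = 2 * Real.log (Real.sqrt u) := by rw [Real.log_sqrt h0.le]; ring
  rw [this]
  have := Real.log_le_sub_one_of_pos (Real.sqrt_pos.2 h0)
  nlinarith [Real.sqrt_nonneg u]

private lemma two_pow_le_two_mul_factorial : ∀ l : ℕ, 2 ^ l ≤ 2 * l ! := by
  intro l
  induction l with
  | zero => simp
  | succ n ih =>
    rcases Nat.eq_zero_or_pos n with rfl | hn
    · simp [Nat.factorial]
    · calc 2 ^ (n+1) = 2 * 2 ^ n := by ring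
        _ ≤ 2 * (2 * n !) := by omega
        _ ≤ 2 * ((n+1) * n !) := by
            have : 2 ≤ n + 1 := by omega
            exact Nat.mul_le_mul_left 2 (Nat.mul_le_mul_right _ this)
        _ = 2 * (n+1)! := by rw [Nat.factorial_succ]

/-- For fixed positive `j`, the finite entropies
`s_j(n) = −∑_{l=0}^{⌊n/j⌋} p_l(n)·log p_l(n)`, where
`p_l(n) = (1/(l!·j^l))·∑_{k=0}^{⌊(n−j·l)/j⌋} (−1)^k/(j^k·k!)`, converge as `n → ∞` to
`s_j = 1/j + e^{−1/j}·∑_{l} log(l!·j^l)/(l!·j^l)`. -/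
theorem stmt6 (j : ℕ) (hj : 0 < j) :
    Filter.Tendsto
      (fun n : ℕ =>
        -∑ l ∈ Finset.range (n / j + 1),
          ((1 / ((l ! : ℝ) * (j : ℝ) ^ l)) *
              ∑ k ∈ Finset.range ((n - j * l) / j + 1), (-1 : ℝ) ^ k / ((j : ℝ) ^ k * (k ! : ℝ))) *
            Real.log ((1 / ((l ! : ℝ) * (j : ℝ) ^ l)) *
              ∑ k ∈ Finset.range ((n - j * l) / j + 1), (-1 : ℝ) ^ k / ((j : ℝ) ^ k * (k ! : ℝ))))
      Filter.atTop
      (nhds (1 / (j : ℝ) +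
        Real.exp (-1 / (j : ℝ)) *
          ∑' l : ℕ, Real.log ((l ! : ℝ) * (j : ℝ) ^ l) / ((l ! : ℝ) * (j : ℝ) ^ l))) := by
  have hj1 : (1:ℝ) ≤ (j:ℝ) := by exact_mod_cast hj
  have hjpos : (0:ℝ) < (j:ℝ) := lt_of_lt_of_le one_pos hj1
  set x : ℝ := (j:ℝ)⁻¹ with hxdef
  have hx0 : 0 < x := inv_pos.2 hjpos
  have hx1 : x ≤ 1 := inv_le_one_of_one_le₀ hj1
  set D : ℕ → ℝ := fun l => (l ! : ℝ) * (j:ℝ)^l with hD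
  have hDpos : ∀ l, 0 < D l := fun l => by
    rw [hD]; positivity
  have hD1 : ∀ l, 1 ≤ D l := fun l => by
    rw [hD]; dsimp only
    have h1 : (1:ℝ) ≤ (l ! : ℝ) := by exact_mod_cast Nat.one_le_iff_ne_zero.2 l.factorial_ne_zero
    have h2 : (1:ℝ) ≤ (j:ℝ)^l := one_le_pow₀ hj1
    nlinarith
  have hAle : ∀ l, 1 / D l ≤ 2 * (2⁻¹:ℝ)^l := by
    intro l
    have h2 : (1:ℝ) ≤ (j:ℝ)^l := one_le_pow₀ hj1
    have hfact : (2:ℝ)^l ≤ 2 * (l ! : ℝ) := by exact_mod_cast two_pow_le_two_mul_factorial l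
    have hfpos : (0:ℝ) < (l ! : ℝ) := by positivity
    rw [hD]
    have key : 1 / ((l ! : ℝ) * (j:ℝ)^l) ≤ 1 / (l ! : ℝ) := by
      apply one_div_le_one_div_of_le hfpos
      nlinarith
    refine key.trans ?_
    have hp : (0:ℝ) < 2^l := by positivity
    have he : (2:ℝ) * (2⁻¹:ℝ)^l = 2 / 2^l := by
      rw [inv_pow, div_eq_mul_inv]
    rw [he, div_le_div_iff₀ hfpos hp, one_mul]
    linarith
  -- the partial sums T
  set T : ℕ → ℝ := fun m => ∑ k ∈ Finset.range m, (-1:ℝ)^k / ((j:ℝ)^k * (k ! : ℝ)) with hT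
  have hterm : ∀ k : ℕ, (-x)^k / (k ! : ℝ) = (-1:ℝ)^k / ((j:ℝ)^k * (k ! : ℝ)) := by
    intro k
    rw [neg_pow, hxdef, div_eq_div_iff (by positivity) (by positivity)]
    have h : (j:ℝ)^k * ((j:ℝ)⁻¹)^k = 1 := by
      rw [← mul_pow, mul_inv_cancel₀ hjpos.ne', one_pow]
    linear_combination ((-1:ℝ)^k * (k ! : ℝ)) * h
  have hsum_negx : HasSum (fun k : ℕ => (-x)^k / (k ! : ℝ)) (Real.exp (-x)) := by
    rw [Real.exp_eq_exp_ℝ]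
    exact NormedSpace.expSeries_div_hasSum_exp (-x)
  have hsum_x : HasSum (fun k : ℕ => x^k / (k ! : ℝ)) (Real.exp x) := by
    rw [Real.exp_eq_exp_ℝ]
    exact NormedSpace.expSeries_div_hasSum_exp x
  have hTtend : Tendsto T atTop (nhds (Real.exp (-x))) := by
    have h := hsum_negx.tendsto_sum_nat
    exact h.congr fun m => Finset.sum_congr rfl fun k _ => hterm k
  have hTbound : ∀ m, |T m| ≤ 4 := by
    intro m
    have h1 : |T m| ≤ ∑ k ∈ Finset.range m, x^k / (k ! : ℝ) := by
      refine (Finset.abs_sum_le_sum_abs _ _).trans ?_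
      refine Finset.sum_le_sum fun k _ => ?_
      rw [← hterm k, abs_div, abs_pow, abs_neg, abs_of_pos hx0, Nat.abs_cast]
    have h2 : ∑ k ∈ Finset.range m, x^k / (k ! : ℝ) ≤ Real.exp x := by
      rw [← hsum_x.tsum_eq]
      exact Summable.sum_le_tsum (Finset.range m) (fun k _ => by positivity) hsum_x.summable
    have h3 : Real.exp x ≤ Real.exp 1 := Real.exp_le_exp.2 hx1
    have h4 : Real.exp 1 < 3 := Real.exp_one_lt_d9.trans_le (by norm_num)
    linarith
  -- the extended summands and their limits
  set F : ℕ → ℕ → ℝ := fun n l =>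
    if l < n / j + 1 then
      ((1 / D l) * T ((n - j*l)/j + 1)) * Real.log ((1 / D l) * T ((n - j*l)/j + 1))
    else 0 with hF
  set g : ℕ → ℝ := fun l =>
    ((1 / D l) * Real.exp (-x)) * Real.log ((1 / D l) * Real.exp (-x)) with hg
  set bound : ℕ → ℝ := fun l => 2 * Real.sqrt (8 * (2⁻¹:ℝ)^l) + (8 * (2⁻¹:ℝ)^l)^2 with hbound
  have hgeom : ∀ r : ℝ, 0 ≤ r → r < 1 → Summable (fun l : ℕ => r ^ l) := by
    intro r h0 h1; exact summable_geometric_of_lt_one h0 h1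
  have hsqrt_half_lt : Real.sqrt (2⁻¹:ℝ) < 1 := by
    rw [show (1:ℝ) = Real.sqrt 1 from (Real.sqrt_one).symm]
    exact Real.sqrt_lt_sqrt (by norm_num) (by norm_num)
  have hbd_summable : Summable bound := by
    have h1 : Summable (fun l : ℕ => (2 * Real.sqrt 8) * (Real.sqrt (2⁻¹:ℝ))^l) :=
      (hgeom _ (Real.sqrt_nonneg _) hsqrt_half_lt).mul_left _
    have h2 : Summable (fun l : ℕ => (64:ℝ) * (4⁻¹:ℝ)^l) :=
      (hgeom (4⁻¹:ℝ) (by norm_num) (by norm_num)).mul_left _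
    refine (h1.add h2).congr fun l => ?_
    rw [hbound]; dsimp only
    have e1 : Real.sqrt (8 * (2⁻¹:ℝ)^l) = Real.sqrt 8 * (Real.sqrt (2⁻¹:ℝ))^l := by
      rw [Real.sqrt_mul (by norm_num), sqrt_pow_aux _ (by norm_num)]
    have e2 : (8 * (2⁻¹:ℝ)^l)^2 = 64 * (4⁻¹:ℝ)^l := by
      rw [mul_pow, ← pow_mul, mul_comm l 2, pow_mul]
      norm_num
    rw [e1, e2]; ring
  have h_bound : ∀ n, ∀ l, ‖F n l‖ ≤ bound l := by
    intro n l
    have hb0 : (0:ℝ) ≤ bound l := by rw [hbound]; positivity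
    rw [hF]; dsimp only
    split_ifs with h
    · set t := (1 / D l) * T ((n - j*l)/j + 1) with ht
      have habs : |t| ≤ 8 * (2⁻¹:ℝ)^l := by
        rw [ht, abs_mul, abs_of_pos (by positivity : (0:ℝ) < 1 / D l)]
        calc (1 / D l) * |T ((n - j*l)/j + 1)| ≤ (2 * (2⁻¹:ℝ)^l) * 4 := by
              exact mul_le_mul (hAle l) (hTbound _) (abs_nonneg _) (by positivity)
          _ = 8 * (2⁻¹:ℝ)^l := by ring
      have h1 : Real.sqrt |t| ≤ Real.sqrt (8 * (2⁻¹:ℝ)^l) := Real.sqrt_le_sqrt habs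
      have h2 : t^2 ≤ (8 * (2⁻¹:ℝ)^l)^2 := by
        have := sq_abs t
        nlinarith [abs_nonneg t]
      have h3 := abs_mul_log_le t
      rw [hbound]
      show |t * Real.log t| ≤ 2 * Real.sqrt (8 * (2⁻¹:ℝ)^l) + (8 * (2⁻¹:ℝ)^l)^2
      linarith
    · simpa using hb0
  have hptwise : ∀ l, Tendsto (fun n => F n l) atTop (nhds (g l)) := by
    intro l
    have hm : Tendsto (fun n : ℕ => (n - j*l)/j + 1) atTop atTop := by
      have h1 : Tendsto (fun n : ℕ => n - j*l) atTop atTop := tendsto_sub_atTop_nat _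
      have h2 : Tendsto (fun n : ℕ => n / j) atTop atTop :=
        le_of_eq (Filter.map_div_atTop_eq_nat j hj)
      exact (tendsto_add_atTop_nat 1).comp (h2.comp h1)
    have hq : Tendsto (fun n : ℕ => (1 / D l) * T ((n - j*l)/j + 1)) atTop
        (nhds ((1 / D l) * Real.exp (-x))) := (hTtend.comp hm).const_mul _
    have hc : (1 / D l) * Real.exp (-x) ≠ 0 := by positivity
    have hcont : ContinuousAt (fun t : ℝ => t * Real.log t) ((1 / D l) * Real.exp (-x)) :=
      continuousAt_id.mul (Real.continuousAt_log hc)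
    have h3 : Tendsto (fun n : ℕ =>
        ((1 / D l) * T ((n - j*l)/j + 1)) * Real.log ((1 / D l) * T ((n - j*l)/j + 1)))
        atTop (nhds (g l)) := hcont.tendsto.comp hq
    refine h3.congr' ?_
    filter_upwards [eventually_ge_atTop (j*l)] with n hn
    rw [hF]; dsimp only
    rw [if_pos]
    have hle : l ≤ n / j := (Nat.le_div_iff_mul_le hj).2 (by rw [mul_comm]; exact hn)
    omega
  have hmain : Tendsto (fun n => ∑' l, F n l) atTop (nhds (∑' l, g l)) :=
    tendsto_tsum_of_dominated_convergence hbd_summable hptwise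
      (Filter.Eventually.of_forall h_bound)
  -- identify the limit
  have hA : ∀ l : ℕ, x^l / (l ! : ℝ) = 1 / D l := by
    intro l
    rw [hxdef, hD]; dsimp only
    rw [inv_pow, div_eq_div_iff (by positivity) (by positivity), one_mul]
    have h : (j:ℝ)^l * ((j:ℝ)⁻¹)^l = 1 := by
      rw [← mul_pow, mul_inv_cancel₀ hjpos.ne', one_pow]
    linear_combination ((l ! : ℝ)) * h
  have hDsum : HasSum (fun l : ℕ => 1 / D l) (Real.exp x) := by
    have := hsum_x
    rwa [funext hA] at this
  have hlogsum : Summable (fun l : ℕ => Real.log (D l) / D l) := by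
    have hnn : ∀ l, 0 ≤ Real.log (D l) / D l :=
      fun l => div_nonneg (Real.log_nonneg (hD1 l)) (hDpos l).le
    refine Summable.of_nonneg_of_le hnn (fun l => ?_)
      (((hgeom _ (Real.sqrt_nonneg _) hsqrt_half_lt).mul_left
        (2 * Real.sqrt 2)) : Summable (fun l : ℕ => 2 * Real.sqrt 2 * (Real.sqrt (2⁻¹:ℝ))^l))
    -- log D / D ≤ 2 / √D ≤ 2 √(1/D) ≤ 2 √(2 (1/2)^l) = 2√2 (√(1/2))^l
    have hDp := hDpos l
    have hs : 0 < Real.sqrt (D l) := Real.sqrt_pos.2 hDp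
    have h1 : Real.log (D l) / D l ≤ 2 * Real.sqrt (D l) / D l :=
      (div_le_div_iff_of_pos_right hDp).2 (log_le_two_sqrt _ (hD1 l))
    have h2 : 2 * Real.sqrt (D l) / D l = 2 * (1 / Real.sqrt (D l)) := by
      rw [mul_div_assoc, Real.sqrt_div_self']
    have h3 : (1:ℝ) / Real.sqrt (D l) = Real.sqrt (1 / D l) := by
      rw [one_div, one_div, Real.sqrt_inv]
    have h4 : Real.sqrt (1 / D l) ≤ Real.sqrt (2 * (2⁻¹:ℝ)^l) := Real.sqrt_le_sqrt (hAle l)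
    have h5 : Real.sqrt (2 * (2⁻¹:ℝ)^l) = Real.sqrt 2 * (Real.sqrt (2⁻¹:ℝ))^l := by
      rw [Real.sqrt_mul (by norm_num), sqrt_pow_aux _ (by norm_num)]
    calc Real.log (D l) / D l ≤ 2 * Real.sqrt (D l) / D l := h1
      _ = 2 * (1 / Real.sqrt (D l)) := h2
      _ = 2 * Real.sqrt (1 / D l) := by rw [h3]
      _ ≤ 2 * (Real.sqrt 2 * (Real.sqrt (2⁻¹:ℝ))^l) := by rw [← h5]; linarith
      _ = 2 * Real.sqrt 2 * (Real.sqrt (2⁻¹:ℝ))^l := by ring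
  have hfinal : HasSum (fun l => -(g l))
      (1 / (j:ℝ) + Real.exp (-1/(j:ℝ)) * ∑' l : ℕ, Real.log (D l) / D l) := by
    have h1 : HasSum (fun l : ℕ => x * Real.exp (-x) * (1 / D l))
        (x * Real.exp (-x) * Real.exp x) := hDsum.mul_left _
    have h2 : HasSum (fun l : ℕ => Real.exp (-x) * (Real.log (D l) / D l))
        (Real.exp (-x) * ∑' l : ℕ, Real.log (D l) / D l) := hlogsum.hasSum.mul_left _
    have h3 := h1.add h2
    have hval : x * Real.exp (-x) * Real.exp x = x := by
      rw [mul_assoc, ← Real.exp_add]; simp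
    have hptw : (fun l : ℕ => x * Real.exp (-x) * (1 / D l)
        + Real.exp (-x) * (Real.log (D l) / D l)) = fun l => -(g l) := by
      funext l
      rw [hg]; dsimp only
      have hlog2 : Real.log ((1 / D l) * Real.exp (-x)) = -Real.log (D l) + -x := by
        rw [Real.log_mul (by positivity) (Real.exp_ne_zero _), Real.log_exp, one_div,
          Real.log_inv]
      rw [hlog2]
      have := (hDpos l).ne'
      field_simp
      ring
    have hxj : -1 / (j:ℝ) = -x := by rw [hxdef, neg_div, one_div]
    have hx1j : 1 / (j:ℝ) = x := by rw [hxdef, one_div]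
    rw [hval, hptw] at h3
    rw [hxj, hx1j]
    exact h3
  have hgoalval : -∑' l, g l
      = 1 / (j:ℝ) + Real.exp (-1/(j:ℝ)) * ∑' l : ℕ, Real.log (D l) / D l := by
    rw [← hfinal.tsum_eq, tsum_neg]
  have hneg := hmain.neg
  rw [hgoalval] at hneg
  have hfun : ∀ n : ℕ, (-∑' l, F n l) = -∑ l ∈ Finset.range (n / j + 1),
      ((1 / ((l ! : ℝ) * (j : ℝ) ^ l)) *
          ∑ k ∈ Finset.range ((n - j * l) / j + 1), (-1 : ℝ) ^ k / ((j : ℝ) ^ k * (k ! : ℝ))) *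
        Real.log ((1 / ((l ! : ℝ) * (j : ℝ) ^ l)) *
          ∑ k ∈ Finset.range ((n - j * l) / j + 1), (-1 : ℝ) ^ k / ((j : ℝ) ^ k * (k ! : ℝ))) := by
    intro n
    congr 1
    rw [tsum_eq_sum (s := Finset.range (n / j + 1)) (fun l hl => by
      rw [hF]; dsimp only; rw [if_neg (by simpa using hl)])]
    refine Finset.sum_congr rfl fun l hl => ?_
    rw [hF, hD, hT]; dsimp only
    rw [if_pos (Finset.mem_range.1 hl)]
  exact Tendsto.congr hfun hneg
end

section
/- Let M be a positive integer and m an integer. Then ∫_{[0,2π]^M} exp(i·m·(θ_1+⋯+θ_M)) · ∏_{1≤a<b≤M} |exp(iθ_a) − exp(iθ_b)|² dθ_1⋯dθ_M equals M!·(2π)^M if m = 0, and equals 0 if m ≠ 0. -/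
open scoped BigOperators Real

open Finset MeasureTheory

private lemma coordInt (k : ℤ) :
    (∫ θ in Set.Icc (0:ℝ) (2*Real.pi), Complex.exp (Complex.I * (k:ℂ) * (θ:ℂ)))
      = if k = 0 then ((2*Real.pi : ℝ) : ℂ) else 0 := by
  have h2 : (0:ℝ) ≤ 2*Real.pi := by positivity
  rw [MeasureTheory.integral_Icc_eq_integral_Ioc,
    ← intervalIntegral.integral_of_le h2]
  by_cases hk : k = 0
  · simp [hk]
  · have hc : Complex.I * (k:ℂ) ≠ 0 :=
      mul_ne_zero Complex.I_ne_zero (Int.cast_ne_zero.2 hk)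
    rw [if_neg hk]
    rw [show (fun θ:ℝ => Complex.exp (Complex.I * (k:ℂ) * (θ:ℂ)))
        = fun θ:ℝ => Complex.exp ((Complex.I * (k:ℂ)) * (θ:ℂ)) from rfl]
    rw [integral_exp_mul_complex hc]
    have h1 : Complex.I * (k:ℂ) * ((2*Real.pi : ℝ):ℂ) = (k:ℂ) * (2 * Real.pi * Complex.I) := by
      push_cast; ring
    rw [h1, Complex.exp_int_mul_two_pi_mul_I]
    simp

private lemma setpi {n : ℕ} (f : Fin n → ℝ → ℂ) :
    (∫ x : Fin n → ℝ in Set.univ.pi fun _ : Fin n => Set.Icc (0:ℝ) (2*Real.pi),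
      ∏ a, f a (x a))
      = ∏ a, ∫ y in Set.Icc (0:ℝ) (2*Real.pi), f a y := by
  have hs : MeasurableSet (Set.Icc (0:ℝ) (2*Real.pi)) := measurableSet_Icc
  rw [← MeasureTheory.integral_indicator (MeasurableSet.univ_pi fun _ => hs)]
  have heq : (Set.univ.pi fun _ : Fin n => Set.Icc (0:ℝ) (2*Real.pi)).indicator
      (fun x => ∏ a, f a (x a))
      = fun x => ∏ a, (Set.Icc (0:ℝ) (2*Real.pi)).indicator (f a) (x a) := by
    funext x
    by_cases hx : x ∈ Set.univ.pi fun _ : Fin n => Set.Icc (0:ℝ) (2*Real.pi)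
    · rw [Set.indicator_of_mem hx]
      exact Finset.prod_congr rfl fun a _ =>
        (Set.indicator_of_mem (hx a trivial) _).symm
    · rw [Set.indicator_of_notMem hx]
      rw [Set.mem_univ_pi] at hx; push_neg at hx
      obtain ⟨a, ha⟩ := hx
      exact (Finset.prod_eq_zero (Finset.mem_univ a)
        (Set.indicator_of_notMem ha _)).symm
  rw [heq, MeasureTheory.volume_pi]
  beta_reduce
  rw [MeasureTheory.integral_fintype_prod_eq_prod (ι := Fin n)
      (fun a => (Set.Icc (0:ℝ) (2*Real.pi)).indicator (f a))]
  exact Finset.prod_congr rfl fun a _ => (MeasureTheory.integral_indicator hs)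

private lemma prod_pairs' {n : ℕ} (f : Fin n → Fin n → ℂ) :
    (∏ p ∈ Finset.univ.filter (fun p : Fin n × Fin n => p.1 < p.2), f p.1 p.2)
      = ∏ i, ∏ j ∈ Finset.Ioi i, f i j := by
  rw [show (∏ i, ∏ j ∈ Finset.Ioi i, f i j)
      = ∏ x ∈ (Finset.univ.sigma fun i : Fin n => Finset.Ioi i), f x.1 x.2 from
    (Finset.prod_sigma Finset.univ (fun i => Finset.Ioi i) (fun x => f x.1 x.2)).symm]
  refine Finset.prod_bij' (fun p _ => ⟨p.1, p.2⟩) (fun x _ => (x.1, x.2))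
    ?_ ?_ ?_ ?_ ?_ <;> simp

private lemma pointwise (M : ℕ) (m : ℤ) (θ : Fin M → ℝ) :
    Complex.exp (Complex.I * (m : ℂ) * ((∑ a, θ a : ℝ) : ℂ)) *
        ∏ p ∈ Finset.univ.filter (fun p : Fin M × Fin M => p.1 < p.2),
          ((‖Complex.exp (Complex.I * (θ p.1 : ℂ)) -
              Complex.exp (Complex.I * (θ p.2 : ℂ))‖ ^ 2 : ℝ) : ℂ)
      = ∑ σ : Equiv.Perm (Fin M), ∑ τ : Equiv.Perm (Fin M),
          (((Equiv.Perm.sign σ : ℤ) : ℂ) * ((Equiv.Perm.sign τ : ℤ) : ℂ)) *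
            ∏ a, Complex.exp (Complex.I *
              ((m + ((σ⁻¹ a : Fin M) : ℕ) - ((τ⁻¹ a : Fin M) : ℕ) : ℤ) : ℂ) * (θ a : ℂ)) := by
  set z : Fin M → ℂ := fun a => Complex.exp (Complex.I * (θ a : ℂ)) with hzdef
  set w : Fin M → ℂ := fun a => Complex.exp (-(Complex.I * (θ a : ℂ))) with hwdef
  have hterm : ∀ a b : Fin M, ((‖z a - z b‖ ^ 2 : ℝ) : ℂ) = (z a - z b) * (w a - w b) := by
    intro a b
    have h1 : ((‖z a - z b‖ ^ 2 : ℝ) : ℂ) = (z a - z b) * (starRingEnd ℂ) (z a - z b) := by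
      rw [Complex.mul_conj]
      norm_cast
      simp [Complex.normSq_eq_norm_sq]
    rw [h1]
    congr 1
    simp only [map_sub, hzdef, hwdef, ← Complex.exp_conj, map_mul, Complex.conj_I,
      Complex.conj_ofReal, neg_mul]
  have hprod : (∏ p ∈ Finset.univ.filter (fun p : Fin M × Fin M => p.1 < p.2),
      ((‖z p.1 - z p.2‖ ^ 2 : ℝ) : ℂ))
      = (Matrix.vandermonde z).det * (Matrix.vandermonde w).det := by
    rw [Finset.prod_congr rfl fun p _ => hterm p.1 p.2,
      prod_pairs' (fun i j => (z i - z j) * (w i - w j))]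
    have : ∀ i : Fin M, ∀ j ∈ Finset.Ioi i,
        (z i - z j) * (w i - w j) = (z j - z i) * (w j - w i) := fun i j _ => by ring
    rw [Finset.prod_congr rfl fun i _ => Finset.prod_congr rfl (this i)]
    rw [Matrix.det_vandermonde, Matrix.det_vandermonde, ← Finset.prod_mul_distrib]
    exact Finset.prod_congr rfl fun i _ => Finset.prod_mul_distrib
  rw [hprod, Matrix.det_apply', Matrix.det_apply', Finset.sum_mul_sum, Finset.mul_sum]
  refine Finset.sum_congr rfl fun σ _ => ?_
  rw [Finset.mul_sum]
  refine Finset.sum_congr rfl fun τ _ => ?_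
  simp only [Matrix.vandermonde_apply]
  have hm : Complex.exp (Complex.I * (m : ℂ) * ((∑ a, θ a : ℝ) : ℂ))
      = ∏ a, Complex.exp (Complex.I * (m : ℂ) * (θ a : ℂ)) := by
    rw [← Complex.exp_sum]
    congr 1
    rw [Complex.ofReal_sum, Finset.mul_sum]
  have hz : (∏ i, z (σ i) ^ (i : ℕ)) = ∏ a, z a ^ (((σ⁻¹ a : Fin M)) : ℕ) := by
    rw [← Equiv.prod_comp σ (fun a => z a ^ (((σ⁻¹ a : Fin M)) : ℕ))]
    exact Finset.prod_congr rfl fun i _ => by simp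
  have hw : (∏ i, w (τ i) ^ (i : ℕ)) = ∏ a, w a ^ (((τ⁻¹ a : Fin M)) : ℕ) := by
    rw [← Equiv.prod_comp τ (fun a => w a ^ (((τ⁻¹ a : Fin M)) : ℕ))]
    exact Finset.prod_congr rfl fun i _ => by simp
  have key : Complex.exp (Complex.I * (m : ℂ) * ((∑ a, θ a : ℝ) : ℂ)) *
      ((((Equiv.Perm.sign σ : ℤ) : ℂ) * ∏ i, z (σ i) ^ (i : ℕ)) *
       (((Equiv.Perm.sign τ : ℤ) : ℂ) * ∏ i, w (τ i) ^ (i : ℕ)))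
      = (((Equiv.Perm.sign σ : ℤ) : ℂ) * ((Equiv.Perm.sign τ : ℤ) : ℂ)) *
        ((∏ a, Complex.exp (Complex.I * (m : ℂ) * (θ a : ℂ))) *
         ((∏ a, z a ^ (((σ⁻¹ a : Fin M)) : ℕ)) * (∏ a, w a ^ (((τ⁻¹ a : Fin M)) : ℕ)))) := by
    rw [hm, hz, hw]; ring
  rw [key, ← Finset.prod_mul_distrib, ← Finset.prod_mul_distrib]
  congr 1
  refine Finset.prod_congr rfl fun a _ => ?_
  rw [hzdef, hwdef]
  simp only
  rw [← Complex.exp_nat_mul, ← Complex.exp_nat_mul, ← Complex.exp_add, ← Complex.exp_add]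
  congr 1
  push_cast
  ring


/-- For a positive integer `M` and an integer `m`,
`∫_{[0,2π]^M} exp(i·m·(θ_1+⋯+θ_M))·∏_{a<b} |e^{iθ_a} − e^{iθ_b}|² dθ` equals `M!·(2π)^M`
if `m = 0` and `0` otherwise. -/
theorem stmt12 (M : ℕ) (hM : 0 < M) (m : ℤ) :
    (∫ θ : Fin M → ℝ in Set.univ.pi fun _ : Fin M => Set.Icc (0 : ℝ) (2 * Real.pi),
      Complex.exp (Complex.I * (m : ℂ) * ((∑ a, θ a : ℝ) : ℂ)) *
        ∏ p ∈ Finset.univ.filter (fun p : Fin M × Fin M => p.1 < p.2),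
          ((‖Complex.exp (Complex.I * (θ p.1 : ℂ)) -
              Complex.exp (Complex.I * (θ p.2 : ℂ))‖ ^ 2 : ℝ) : ℂ))
    = if m = 0 then ((M.factorial : ℂ) * ((2 * Real.pi : ℝ) : ℂ) ^ M) else 0 := by
  classical
  have hScompact : IsCompact (Set.univ.pi fun _ : Fin M => Set.Icc (0:ℝ) (2*Real.pi)) :=
    isCompact_univ_pi fun _ => isCompact_Icc
  have hint : ∀ (k : Fin M → ℤ),
      MeasureTheory.IntegrableOn
        (fun θ : Fin M → ℝ => ∏ a, Complex.exp (Complex.I * (k a : ℂ) * (θ a : ℂ)))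
        (Set.univ.pi fun _ : Fin M => Set.Icc (0:ℝ) (2*Real.pi)) := by
    intro k
    have hc : Continuous
        (fun θ : Fin M → ℝ => ∏ a, Complex.exp (Complex.I * (k a : ℂ) * (θ a : ℂ))) := by
      refine continuous_finset_prod _ fun a _ => Complex.continuous_exp.comp ?_
      exact continuous_const.mul (Complex.continuous_ofReal.comp (continuous_apply a))
    exact hc.continuousOn.integrableOn_compact hScompact
  simp only [pointwise M m]
  rw [MeasureTheory.integral_finset_sum _ (fun σ _ =>
    MeasureTheory.integrable_finset_sum _ (fun τ _ =>
      ((hint fun a => (m + ((σ⁻¹ a : Fin M) : ℕ) - ((τ⁻¹ a : Fin M) : ℕ) : ℤ)).const_mul _)))]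
  have hswap : ∀ σ : Equiv.Perm (Fin M),
      (∫ θ : Fin M → ℝ in Set.univ.pi fun _ : Fin M => Set.Icc (0:ℝ) (2*Real.pi),
        ∑ τ : Equiv.Perm (Fin M),
          (((Equiv.Perm.sign σ : ℤ) : ℂ) * ((Equiv.Perm.sign τ : ℤ) : ℂ)) *
            ∏ a, Complex.exp (Complex.I *
              ((m + ((σ⁻¹ a : Fin M) : ℕ) - ((τ⁻¹ a : Fin M) : ℕ) : ℤ) : ℂ) * (θ a : ℂ)))
      = ∑ τ : Equiv.Perm (Fin M),
          (((Equiv.Perm.sign σ : ℤ) : ℂ) * ((Equiv.Perm.sign τ : ℤ) : ℂ)) *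
            if (m = 0 ∧ σ = τ) then ((2*Real.pi : ℝ) : ℂ) ^ M else 0 := by
    intro σ
    rw [MeasureTheory.integral_finset_sum _ (fun τ _ =>
      ((hint fun a => (m + ((σ⁻¹ a : Fin M) : ℕ) - ((τ⁻¹ a : Fin M) : ℕ) : ℤ)).const_mul _))]
    refine Finset.sum_congr rfl fun τ _ => ?_
    rw [MeasureTheory.integral_const_mul]
    congr 1
    rw [setpi (fun a t => Complex.exp (Complex.I *
      ((m + ((σ⁻¹ a : Fin M) : ℕ) - ((τ⁻¹ a : Fin M) : ℕ) : ℤ) : ℂ) * (t : ℂ)))]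
    rw [Finset.prod_congr rfl fun a _ => coordInt
      (m + ((σ⁻¹ a : Fin M) : ℕ) - ((τ⁻¹ a : Fin M) : ℕ) : ℤ)]
    by_cases h : ∀ a : Fin M,
        (m + ((σ⁻¹ a : Fin M) : ℕ) - ((τ⁻¹ a : Fin M) : ℕ) : ℤ) = 0
    · have hsum : ∑ a : Fin M,
          (m + (((σ⁻¹ a : Fin M)) : ℕ) - (((τ⁻¹ a : Fin M)) : ℕ) : ℤ) = 0 := by
        exact Finset.sum_eq_zero fun a _ => h a
      have hσs : ∑ a : Fin M, ((((σ⁻¹ a : Fin M)) : ℕ) : ℤ)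
          = ∑ a : Fin M, ((a : ℕ) : ℤ) := Equiv.sum_comp σ⁻¹ (fun b : Fin M => ((b : ℕ) : ℤ))
      have hτs : ∑ a : Fin M, ((((τ⁻¹ a : Fin M)) : ℕ) : ℤ)
          = ∑ a : Fin M, ((a : ℕ) : ℤ) := Equiv.sum_comp τ⁻¹ (fun b : Fin M => ((b : ℕ) : ℤ))
      have hMm : (M : ℤ) * m = 0 := by
        have e1 : ∑ a : Fin M,
            (m + (((σ⁻¹ a : Fin M)) : ℕ) - (((τ⁻¹ a : Fin M)) : ℕ) : ℤ)
            = (M : ℤ) * m + (∑ a : Fin M, ((((σ⁻¹ a : Fin M)) : ℕ) : ℤ))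
              - ∑ a : Fin M, ((((τ⁻¹ a : Fin M)) : ℕ) : ℤ) := by
          rw [Finset.sum_sub_distrib, Finset.sum_add_distrib, Finset.sum_const,
            Finset.card_univ, Fintype.card_fin]
          simp [nsmul_eq_mul]
        rw [e1, hσs, hτs] at hsum
        omega
      have hm0 : m = 0 := by
        have hMne : (M : ℤ) ≠ 0 := by exact_mod_cast hM.ne'
        exact (mul_eq_zero.mp hMm).resolve_left hMne
      have hστ : σ = τ := by
        have hinv : σ⁻¹ = τ⁻¹ := by
          refine Equiv.ext fun a => ?_
          have := h a
          rw [hm0] at this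
          have hnat : (((σ⁻¹ a : Fin M)) : ℕ) = (((τ⁻¹ a : Fin M)) : ℕ) := by omega
          exact Fin.ext hnat
        exact inv_injective hinv
      rw [if_pos ⟨hm0, hστ⟩,
        Finset.prod_congr rfl (fun a _ => if_pos (h a)),
        Finset.prod_const, Finset.card_univ, Fintype.card_fin]
    · push_neg at h
      obtain ⟨a, ha⟩ := h
      rw [if_neg (by rintro ⟨hm0, rfl⟩; simp [hm0] at ha :
        ¬ (m = 0 ∧ σ = τ))]
      exact Finset.prod_eq_zero (Finset.mem_univ a) (if_neg ha)
  rw [Finset.sum_congr rfl fun σ _ => hswap σ]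
  by_cases hm : m = 0
  · rw [if_pos hm]
    simp only [hm, true_and]
    have hσterm : ∀ σ : Equiv.Perm (Fin M),
        (∑ τ : Equiv.Perm (Fin M),
          (((Equiv.Perm.sign σ : ℤ) : ℂ) * ((Equiv.Perm.sign τ : ℤ) : ℂ)) *
            if σ = τ then ((2*Real.pi : ℝ) : ℂ) ^ M else 0)
        = ((2*Real.pi : ℝ) : ℂ) ^ M := by
      intro σ
      rw [Finset.sum_eq_single σ]
      · have hs : ((Equiv.Perm.sign σ : ℤ) : ℂ) * ((Equiv.Perm.sign σ : ℤ) : ℂ) = 1 := by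
          rcases Int.units_eq_one_or (Equiv.Perm.sign σ) with h | h <;> rw [h] <;> norm_num
        rw [if_pos rfl, hs, one_mul]
      · intro τ _ hτ
        rw [if_neg (fun hh => hτ hh.symm), mul_zero]
      · intro hτ
        exact absurd (Finset.mem_univ σ) hτ
    rw [Finset.sum_congr rfl fun σ _ => hσterm σ, Finset.sum_const, Finset.card_univ,
      Fintype.card_perm, Fintype.card_fin, nsmul_eq_mul]
  · rw [if_neg hm]
    have hne : ∀ σ τ : Equiv.Perm (Fin M), ¬ (m = 0 ∧ σ = τ) := fun σ τ hh => hm hh.1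
    rw [Finset.sum_congr rfl fun σ _ => Finset.sum_congr rfl fun τ _ => by
      rw [if_neg (hne σ τ), mul_zero]]
    simp
end

section
/- Let m, n be natural numbers and let x : Fin m → ℂ and y : Fin n → ℂ satisfy ‖x_i‖ < 1 for all i and ‖y_j‖ < 1 for all j. Then exp(Σ_{k=1}^∞ (Σ_{i} x_i^k)·(Σ_{j} y_j^k)/k) = ∏_{i,j} (1 − x_i·y_j)^{-1}, the series on the left being absolutely convergent and every factor 1 − x_i·y_j being nonzero. -/
open scoped BigOperators
set_option maxHeartbeats 1000000

lemma aux_hasSum {z : ℂ} (hz : ‖z‖ < 1) :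
    HasSum (fun k : ℕ => z ^ (k + 1) / ((k : ℂ) + 1)) (-Complex.log (1 - z)) := by
  have h := Complex.hasSum_taylorSeries_neg_log hz
  have h2 : HasSum (fun k : ℕ => z ^ (k + 1) / (((k + 1 : ℕ) : ℂ))) (-Complex.log (1 - z)) := by
    rw [hasSum_nat_add_iff (f := fun n : ℕ => z ^ n / (n : ℂ)) 1]
    convert h using 1
    · rfl
    simp
  convert h2 using 2 with k
  push_cast; ring

lemma aux_ne {z : ℂ} (hz : ‖z‖ < 1) : 1 - z ≠ 0 := by
  intro h
  have : z = 1 := by linear_combination -h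
  rw [this] at hz; simp at hz

/-- For tuples `x : Fin m → ℂ`, `y : Fin n → ℂ` of numbers of norm `< 1`,
`exp(∑_{k=1}^∞ (∑_i x_i^k)·(∑_j y_j^k)/k) = ∏_{i,j} (1 − x_i·y_j)⁻¹`, the series converging
absolutely and every factor `1 − x_i·y_j` being nonzero. -/
theorem stmt13 (m n : ℕ) (x : Fin m → ℂ) (y : Fin n → ℂ)
    (hx : ∀ i, ‖x i‖ < 1) (hy : ∀ j, ‖y j‖ < 1) :
    (Summable fun k : ℕ =>
      ‖(∑ i, x i ^ (k + 1)) * (∑ j, y j ^ (k + 1)) / ((k : ℂ) + 1)‖) ∧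
    (∀ i j, 1 - x i * y j ≠ 0) ∧
    (Complex.exp (∑' k : ℕ, (∑ i, x i ^ (k + 1)) * (∑ j, y j ^ (k + 1)) / ((k : ℂ) + 1))
      = ∏ i, ∏ j, (1 - x i * y j)⁻¹) := by
  have hxy : ∀ i j, ‖x i * y j‖ < 1 := fun i j => by
    rw [norm_mul]
    nlinarith [norm_nonneg (x i), norm_nonneg (y j), hx i, hy j]
  -- rewrite the term as a finite double sum
  have hterm : ∀ k : ℕ, (∑ i, x i ^ (k + 1)) * (∑ j, y j ^ (k + 1)) / ((k : ℂ) + 1)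
      = ∑ i, ∑ j, (x i * y j) ^ (k + 1) / ((k : ℂ) + 1) := by
    intro k
    rw [Finset.sum_mul_sum, Finset.sum_div]
    congr 1 with i
    rw [Finset.sum_div]
    congr 1 with j
    ring
  have hsum : ∀ i j, HasSum (fun k : ℕ => (x i * y j) ^ (k + 1) / ((k : ℂ) + 1))
      (-Complex.log (1 - x i * y j)) := fun i j => aux_hasSum (hxy i j)
  have hS : HasSum (fun k : ℕ => (∑ i, x i ^ (k + 1)) * (∑ j, y j ^ (k + 1)) / ((k : ℂ) + 1))
      (∑ i, ∑ j, -Complex.log (1 - x i * y j)) := by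
    simp only [hterm]
    exact hasSum_sum fun i _ => hasSum_sum fun j _ => hsum i j
  refine ⟨?_, fun i j => aux_ne (hxy i j), ?_⟩
  · -- summability of norms: compare with double sum of norms
    have hgn : ∀ i j, Summable (fun k : ℕ => ‖(x i * y j) ^ (k + 1) / ((k : ℂ) + 1)‖) :=
      fun i j => summable_norm_iff.mpr (hsum i j).summable
    have hg : Summable (fun k : ℕ => ∑ i, ∑ j, ‖(x i * y j) ^ (k + 1) / ((k : ℂ) + 1)‖) :=
      (hasSum_sum fun i _ => hasSum_sum fun j _ => (hgn i j).hasSum).summable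
    refine Summable.of_nonneg_of_le (fun k => norm_nonneg _) (fun k => ?_) hg
    rw [hterm k]
    exact (norm_sum_le _ _).trans (Finset.sum_le_sum fun i _ => norm_sum_le _ _)
  · rw [hS.tsum_eq, Complex.exp_sum]
    refine Finset.prod_congr rfl fun i _ => ?_
    rw [Complex.exp_sum]
    refine Finset.prod_congr rfl fun j _ => ?_
    rw [Complex.exp_neg, Complex.exp_log (aux_ne (hxy i j))]
end

section
/- Let L and M be positive integers. In the polynomial ring ℚ[X_1,…,X_M], define h_d for an integer d to be the complete homogeneous symmetric polynomial of degree d in X_1,…,X_M (the sum of all monomials of total degree d) when d ≥ 0, and h_d := 0 when d < 0. Then the determinant of the M×M matrix whose (a,b) entry (for a,b ∈ {1,…,M}) is h_{L+b−a} equals (X_1·X_2⋯X_M)^L. -/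
open scoped BigOperators

set_option linter.unusedSectionVars false
set_option linter.unusedVariables false

section JacobiTrudiAux

open Finset MvPolynomial


variable {σ : Type*} [Fintype σ] [DecidableEq σ] [LinearOrder σ]

def comb (p : Finset σ × Multiset σ) : Multiset σ := p.1.val + p.2

lemma union_eq_toFinset (p : Finset σ × Multiset σ) :
    p.1 ∪ p.2.toFinset = (comb p).toFinset := by
  rw [comb, Multiset.toFinset_add, Finset.val_toFinset]

noncomputable def mflip (p : Finset σ × Multiset σ) : Finset σ × Multiset σ :=
  if h : (p.1 ∪ p.2.toFinset).Nonempty then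
    if (p.1 ∪ p.2.toFinset).max' h ∈ p.1 then
      (p.1.erase ((p.1 ∪ p.2.toFinset).max' h), ((p.1 ∪ p.2.toFinset).max' h) ::ₘ p.2)
    else (insert ((p.1 ∪ p.2.toFinset).max' h) p.1, p.2.erase ((p.1 ∪ p.2.toFinset).max' h))
  else p

lemma mflip_of_mem (p : Finset σ × Multiset σ) (h : (p.1 ∪ p.2.toFinset).Nonempty)
    (hmem : (p.1 ∪ p.2.toFinset).max' h ∈ p.1) :
    mflip p = (p.1.erase ((p.1 ∪ p.2.toFinset).max' h), ((p.1 ∪ p.2.toFinset).max' h) ::ₘ p.2) := by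
  rw [mflip, dif_pos h, if_pos hmem]

lemma mem_snd_of_not_mem (p : Finset σ × Multiset σ) (h : (p.1 ∪ p.2.toFinset).Nonempty)
    (hmem : (p.1 ∪ p.2.toFinset).max' h ∉ p.1) : (p.1 ∪ p.2.toFinset).max' h ∈ p.2 := by
  have := Finset.max'_mem _ h
  rw [Finset.mem_union] at this
  rcases this with h1 | h2
  · exact absurd h1 hmem
  · exact Multiset.mem_toFinset.mp h2

lemma mflip_of_not_mem (p : Finset σ × Multiset σ) (h : (p.1 ∪ p.2.toFinset).Nonempty)
    (hmem : (p.1 ∪ p.2.toFinset).max' h ∉ p.1) :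
    mflip p = (insert ((p.1 ∪ p.2.toFinset).max' h) p.1,
      p.2.erase ((p.1 ∪ p.2.toFinset).max' h)) := by
  rw [mflip, dif_pos h, if_neg hmem]

lemma comb_mflip (p : Finset σ × Multiset σ) : comb (mflip p) = comb p := by
  by_cases h : (p.1 ∪ p.2.toFinset).Nonempty
  · by_cases hmem : (p.1 ∪ p.2.toFinset).max' h ∈ p.1
    · rw [mflip_of_mem p h hmem]
      show (p.1.erase _).val + _ = _
      rw [Finset.erase_val, add_comm, Multiset.cons_add, add_comm p.2,
        ← Multiset.cons_add, Multiset.cons_erase (Finset.mem_def.mp hmem)]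
      rfl
    · rw [mflip_of_not_mem p h hmem]
      show (insert _ p.1).val + _ = _
      rw [Finset.insert_val_of_notMem hmem, Multiset.cons_add, add_comm,
        ← Multiset.cons_add, Multiset.cons_erase (mem_snd_of_not_mem p h hmem), add_comm]
      rfl
  · rw [mflip, dif_neg h]

lemma card_comb (p : Finset σ × Multiset σ) :
    Multiset.card (comb p) = p.1.card + Multiset.card p.2 := by
  rw [comb, Multiset.card_add]; rfl

lemma mflip_card_ne (p : Finset σ × Multiset σ) (h : (p.1 ∪ p.2.toFinset).Nonempty) :
    (mflip p).1.card ≠ p.1.card := by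
  by_cases hmem : (p.1 ∪ p.2.toFinset).max' h ∈ p.1
  · rw [mflip_of_mem p h hmem]
    show (p.1.erase _).card ≠ _
    rw [Finset.card_erase_of_mem hmem]
    have : 1 ≤ p.1.card := Finset.card_pos.mpr ⟨_, hmem⟩
    omega
  · rw [mflip_of_not_mem p h hmem]
    show (insert _ p.1).card ≠ _
    rw [Finset.card_insert_of_notMem hmem]
    omega

lemma mflip_mflip (p : Finset σ × Multiset σ) (h : (p.1 ∪ p.2.toFinset).Nonempty) :
    mflip (mflip p) = p := by
  have hu : (mflip p).1 ∪ (mflip p).2.toFinset = p.1 ∪ p.2.toFinset := by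
    rw [union_eq_toFinset, union_eq_toFinset, comb_mflip]
  have h2 : ((mflip p).1 ∪ (mflip p).2.toFinset).Nonempty := by rw [hu]; exact h
  have hmax2 : ((mflip p).1 ∪ (mflip p).2.toFinset).max' h2 = (p.1 ∪ p.2.toFinset).max' h := by
    congr 1
  by_cases hmem : (p.1 ∪ p.2.toFinset).max' h ∈ p.1
  · have hfl := mflip_of_mem p h hmem
    have hnm : ((mflip p).1 ∪ (mflip p).2.toFinset).max' h2 ∉ (mflip p).1 := by
      rw [hmax2, hfl]; exact Finset.notMem_erase _ _
    rw [mflip_of_not_mem _ h2 hnm, hmax2]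
    refine Prod.ext ?_ ?_
    · show insert _ (mflip p).1 = p.1
      rw [hfl]; exact Finset.insert_erase hmem
    · show (mflip p).2.erase _ = p.2
      rw [hfl]; exact Multiset.erase_cons_head _ _
  · have hfl := mflip_of_not_mem p h hmem
    have hm : ((mflip p).1 ∪ (mflip p).2.toFinset).max' h2 ∈ (mflip p).1 := by
      rw [hmax2, hfl]; exact Finset.mem_insert_self _ _
    rw [mflip_of_mem _ h2 hm, hmax2]
    refine Prod.ext ?_ ?_
    · show ((mflip p).1).erase _ = p.1
      rw [hfl]; exact Finset.erase_insert hmem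
    · show _ ::ₘ (mflip p).2 = p.2
      rw [hfl]; exact Multiset.cons_erase (mem_snd_of_not_mem p h hmem)

variable {R : Type*} [CommRing R]

noncomputable def msets (σ : Type*) [Fintype σ] [DecidableEq σ] (m : ℕ) : Finset (Multiset σ) :=
  (Finset.univ : Finset (Sym σ m)).image Sym.toMultiset

lemma mem_msets {m : ℕ} {u : Multiset σ} : u ∈ msets σ m ↔ Multiset.card u = m := by
  constructor
  · rintro h
    simp only [msets, Finset.mem_image] at h
    obtain ⟨s, -, rfl⟩ := h
    exact s.2
  · intro h
    simp only [msets, Finset.mem_image]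
    exact ⟨⟨u, h⟩, Finset.mem_univ _, rfl⟩

lemma hsymm_eq_sum_msets (m : ℕ) :
    hsymm σ R m = ∑ u ∈ msets σ m, (u.map X).prod := by
  rw [msets, Finset.sum_image (fun a _ b _ h => Sym.coe_injective h)]
  rfl

noncomputable def pairsP (σ : Type*) [Fintype σ] [DecidableEq σ] (n : ℕ) :
    Finset (Finset σ × Multiset σ) :=
  (Finset.range (n+1)).biUnion fun k => (Finset.powersetCard k Finset.univ) ×ˢ msets σ (n-k)

lemma mem_pairsP {n : ℕ} {p : Finset σ × Multiset σ} :
    p ∈ pairsP σ n ↔ p.1.card + Multiset.card p.2 = n := by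
  simp only [pairsP, Finset.mem_biUnion, Finset.mem_range, Finset.mem_product,
    Finset.mem_powersetCard, mem_msets]
  constructor
  · rintro ⟨k, hk, ⟨-, hc⟩, hu⟩
    omega
  · intro hsum
    exact ⟨p.1.card, by omega, ⟨Finset.subset_univ _, rfl⟩, by omega⟩

lemma alt_sum_eq_sum_pairsP (n : ℕ) :
    ∑ k ∈ Finset.range (n+1), (-1 : MvPolynomial σ R)^k * esymm σ R k * hsymm σ R (n-k)
    = ∑ p ∈ pairsP σ n, (-1 : MvPolynomial σ R)^p.1.card * ((comb p).map X).prod := by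
  rw [pairsP, Finset.sum_biUnion]
  · refine Finset.sum_congr rfl fun k hk => ?_
    rw [Finset.sum_product, esymm, hsymm_eq_sum_msets, mul_assoc, Finset.sum_mul_sum,
      Finset.mul_sum]
    refine Finset.sum_congr rfl fun t ht => ?_
    rw [Finset.mul_sum]
    refine Finset.sum_congr rfl fun u hu => ?_
    have hcard : t.card = k := (Finset.mem_powersetCard.mp ht).2
    rw [comb, Multiset.map_add, Multiset.prod_add, hcard, Finset.prod_eq_multiset_prod]

  · intro a ha b hb hab
    refine Finset.disjoint_left.mpr fun p hpa hpb => hab ?_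
    rw [Finset.mem_product, Finset.mem_powersetCard] at hpa hpb
    rw [← hpa.1.2, ← hpb.1.2]

lemma nonempty_of_mem_pairsP {n : ℕ} {p : Finset σ × Multiset σ} (hn : 1 ≤ n)
    (hp : p ∈ pairsP σ n) : (p.1 ∪ p.2.toFinset).Nonempty := by
  have hc : Multiset.card (comb p) = n := by rw [card_comb]; exact mem_pairsP.mp hp
  rw [union_eq_toFinset, Multiset.toFinset_nonempty]
  intro h0
  rw [h0] at hc
  simp at hc
  omega

lemma alt_sum_eq_zero (n : ℕ) (hn : 1 ≤ n) :
    ∑ k ∈ Finset.range (n+1), (-1 : MvPolynomial σ R)^k * esymm σ R k * hsymm σ R (n-k) = 0 := by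
  rw [alt_sum_eq_sum_pairsP]
  have key : ∀ p ∈ pairsP σ n,
      ((-1 : MvPolynomial σ R)^(mflip p).1.card + (-1 : MvPolynomial σ R)^p.1.card) = 0 := by
    intro p hp
    have hne := nonempty_of_mem_pairsP hn hp
    by_cases hmem : (p.1 ∪ p.2.toFinset).max' hne ∈ p.1
    · rw [mflip_of_mem p hne hmem]
      show (-1 : MvPolynomial σ R)^(p.1.erase _).card + _ = 0
      rw [Finset.card_erase_of_mem hmem]
      have h1 : 1 ≤ p.1.card := Finset.card_pos.mpr ⟨_, hmem⟩
      obtain ⟨c, hc⟩ : ∃ c, p.1.card = c + 1 := ⟨p.1.card - 1, by omega⟩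
      rw [hc, Nat.add_sub_cancel, pow_succ]
      ring
    · rw [mflip_of_not_mem p hne hmem]
      show (-1 : MvPolynomial σ R)^(insert _ p.1).card + _ = 0
      rw [Finset.card_insert_of_notMem hmem, pow_succ]
      ring
  refine Finset.sum_involution (fun p _ => mflip p) ?_ ?_ ?_ ?_
  · intro p hp
    rw [comb_mflip]
    linear_combination ((comb p).map X).prod * key p hp
  · intro p hp _
    intro heq
    exact mflip_card_ne p (nonempty_of_mem_pairsP hn hp)
      (by rw [heq])
  · intro p hp
    rw [mem_pairsP, ← card_comb, comb_mflip, card_comb]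
    exact mem_pairsP.mp hp
  · intro p hp
    exact mflip_mflip p (nonempty_of_mem_pairsP hn hp)

lemma esymm_eq_zero_of_card_lt {k : ℕ} (h : Fintype.card σ < k) :
    esymm σ R k = 0 := by
  rw [esymm, Finset.powersetCard_eq_empty.2 (by simpa using h)]
  simp

noncomputable def hz (M : ℕ) (d : ℤ) : MvPolynomial (Fin M) ℚ :=
  if d < 0 then 0 else hsymm (Fin M) ℚ d.toNat

lemma rec_z (M : ℕ) (d : ℤ) (hd : 1 ≤ d) :
    ∑ k ∈ Finset.range (M+1),
      (-1 : MvPolynomial (Fin M) ℚ)^k * esymm (Fin M) ℚ k * hz M (d - k) = 0 := by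
  set n := d.toNat with hn
  have hdn : d = (n : ℤ) := by omega
  have hn1 : 1 ≤ n := by omega
  set N := max M n with hN
  set f : ℕ → MvPolynomial (Fin M) ℚ :=
    fun k => (-1 : MvPolynomial (Fin M) ℚ)^k * esymm (Fin M) ℚ k * hz M (d - k) with hf
  have e1 : ∑ k ∈ Finset.range (M+1), f k = ∑ k ∈ Finset.range (N+1), f k := by
    refine Finset.sum_subset (by intro x hx; simp only [Finset.mem_range] at *; omega) ?_
    intro k hk hk2
    simp only [Finset.mem_range] at hk hk2
    have : Fintype.card (Fin M) < k := by rw [Fintype.card_fin]; omega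
    show (-1 : MvPolynomial (Fin M) ℚ)^k * esymm (Fin M) ℚ k * hz M (d - k) = 0
    rw [esymm_eq_zero_of_card_lt this, mul_zero, zero_mul]
  have e2 : ∑ k ∈ Finset.range (N+1), f k = ∑ k ∈ Finset.range (n+1), f k := by
    refine (Finset.sum_subset (by intro x hx; simp only [Finset.mem_range] at *; omega) ?_).symm
    intro k hk hk2
    simp only [Finset.mem_range] at hk hk2
    have : d - k < 0 := by omega
    show (-1 : MvPolynomial (Fin M) ℚ)^k * esymm (Fin M) ℚ k * hz M (d - k) = 0
    rw [hz, if_pos this, mul_zero]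
  have e3 : ∑ k ∈ Finset.range (n+1), f k = ∑ k ∈ Finset.range (n+1),
      (-1 : MvPolynomial (Fin M) ℚ)^k * esymm (Fin M) ℚ k * hsymm (Fin M) ℚ (n-k) := by
    refine Finset.sum_congr rfl fun k hk => ?_
    simp only [Finset.mem_range] at hk
    have h1 : ¬ (d - k < 0) := by omega
    have h2 : (d - k).toNat = n - k := by omega
    rw [hf]
    simp only [hz, if_neg h1, h2]
  rw [e1, e2, e3]
  exact alt_sum_eq_zero n hn1

noncomputable def matH (M L : ℕ) : Matrix (Fin M) (Fin M) (MvPolynomial (Fin M) ℚ) :=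
  Matrix.of fun a b => hz M ((L : ℤ) + (b : ℤ) - (a : ℤ))

noncomputable def matS (M : ℕ) : Matrix (Fin M) (Fin M) (MvPolynomial (Fin M) ℚ) :=
  Matrix.of fun c b =>
    if (b : ℕ) + 1 = M then
      (-1 : MvPolynomial (Fin M) ℚ)^(M - 1 - (c : ℕ)) * esymm (Fin M) ℚ (M - (c : ℕ))
    else if (c : ℕ) = (b : ℕ) + 1 then 1 else 0

lemma matH_mul_matS (M L : ℕ) : matH M L * matS M = matH M (L + 1) := by
  ext a b
  rw [Matrix.mul_apply]
  by_cases hb : (b : ℕ) + 1 = M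
  · -- last column
    set d : ℤ := (L : ℤ) + M - a with hd
    have hd1 : 1 ≤ d := by
      have := a.isLt
      omega
    have hrec := rec_z M d hd1
    rw [Finset.sum_range_succ'] at hrec
    simp only [Nat.cast_zero, sub_zero, pow_zero, esymm_zero, one_mul, mul_one] at hrec
    -- hrec : (∑ k ∈ range M, (-1)^(k+1) * esymm (k+1) * hz (d - (k+1))) + hz d = 0
    have lhs_eq : ∑ c : Fin M, matH M L a c * matS M c b
        = ∑ k ∈ Finset.range M, hz M ((L : ℤ) + k - a) *
            ((-1 : MvPolynomial (Fin M) ℚ)^(M - 1 - k) * esymm (Fin M) ℚ (M - k)) := by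
      rw [← Fin.sum_univ_eq_sum_range]
      refine Finset.sum_congr rfl fun c _ => ?_
      rw [matH, matS, Matrix.of_apply, Matrix.of_apply, if_pos hb]
    rw [lhs_eq, ← Finset.sum_range_reflect]
    have step : ∀ k ∈ Finset.range M,
        hz M ((L : ℤ) + (M - 1 - k : ℕ) - a) *
          ((-1 : MvPolynomial (Fin M) ℚ)^(M - 1 - (M - 1 - k : ℕ)) *
            esymm (Fin M) ℚ (M - (M - 1 - k : ℕ)))
        = -((-1 : MvPolynomial (Fin M) ℚ)^(k+1) * esymm (Fin M) ℚ (k+1) * hz M (d - (k+1))) := by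
      intro k hk
      simp only [Finset.mem_range] at hk
      have h1 : M - 1 - (M - 1 - k) = k := by omega
      have h2 : M - (M - 1 - k) = k + 1 := by omega
      have h3 : ((L : ℤ) + ((M - 1 - k : ℕ) : ℤ) - a) = d - (k+1) := by
        have : ((M - 1 - k : ℕ) : ℤ) = (M : ℤ) - 1 - k := by omega
        rw [this, hd]; ring
      rw [h1, h2, h3, pow_succ]
      ring
    rw [Finset.sum_congr rfl step, Finset.sum_neg_distrib]
    have : matH M (L+1) a b = hz M d := by
      rw [matH, Matrix.of_apply]
      congr 1
      have : (b : ℤ) = (M : ℤ) - 1 := by omega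
      rw [this, hd]
      push_cast
      ring
    rw [this]
    push_cast at hrec
    rw [eq_neg_of_add_eq_zero_left hrec, neg_neg]
  · -- other columns
    have hblt : (b : ℕ) + 1 < M := by have := b.isLt; omega
    set b' : Fin M := ⟨(b : ℕ) + 1, hblt⟩ with hb'
    have entry : ∀ c : Fin M, matH M L a c * matS M c b
        = if c = b' then matH M L a c else 0 := by
      intro c
      rw [matS, Matrix.of_apply, if_neg hb]
      by_cases hc : c = b'
      · rw [if_pos hc, if_pos (by rw [hc]), mul_one]
      · rw [if_neg hc, if_neg (by
          intro h
          apply hc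
          apply Fin.ext
          simpa using h), mul_zero]
    rw [Finset.sum_congr rfl fun c _ => entry c, Finset.sum_ite_eq' Finset.univ b']
    rw [if_pos (Finset.mem_univ _)]
    rw [matH, matH, Matrix.of_apply, Matrix.of_apply]
    congr 1
    have : (b' : ℤ) = (b : ℤ) + 1 := by simp [hb']
    rw [this]
    push_cast
    ring

lemma det_matS (M : ℕ) (hM : 0 < M) :
    (matS M).det = ∏ i, (X i : MvPolynomial (Fin M) ℚ) := by
  obtain ⟨m, rfl⟩ : ∃ m, M = m + 1 := ⟨M - 1, by omega⟩
  rw [Matrix.det_succ_row_zero]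
  have hzero : ∀ j : Fin (m+1), j ≠ Fin.last m →
      matS (m+1) 0 j = 0 := by
    intro j hj
    rw [matS, Matrix.of_apply, if_neg, if_neg]
    · simp
    · have : (j : ℕ) < m := by
        have := j.isLt
        have : (j : ℕ) ≠ m := fun h => hj (Fin.ext h)
        omega
      omega
  rw [Finset.sum_eq_single (Fin.last m)]
  · have hsub : (matS (m+1)).submatrix Fin.succ (Fin.last m).succAbove = 1 := by
      ext i b
      rw [Matrix.submatrix_apply, Fin.succAbove_last, matS, Matrix.of_apply]
      rw [if_neg (by simp [Fin.coe_castSucc]; omega)]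
      rw [Matrix.one_apply]
      by_cases hib : i = b
      · rw [if_pos (by simp [hib, Fin.coe_castSucc]), if_pos hib]
      · rw [if_neg (by
          simp only [Fin.val_succ, Fin.coe_castSucc]
          intro h
          exact hib (Fin.ext (by omega))), if_neg hib]
    rw [hsub, Matrix.det_one, mul_one]
    rw [matS, Matrix.of_apply, if_pos (by simp)]
    simp only [Fin.val_last, Fin.val_zero, Nat.sub_zero, Nat.add_sub_cancel]
    rw [← mul_assoc, ← pow_add]
    rw [Even.neg_one_pow ⟨m, rfl⟩, one_mul]
    have hps : Finset.powersetCard (m+1) (Finset.univ : Finset (Fin (m+1))) = {Finset.univ} := by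
      simpa using Finset.powersetCard_self (Finset.univ : Finset (Fin (m+1)))
    rw [esymm, hps, Finset.sum_singleton]
  · intro j _ hj
    rw [hzero j hj, mul_zero, zero_mul]
  · intro h
    exact absurd (Finset.mem_univ _) h

lemma det_matH_zero (M : ℕ) : (matH M 0).det = 1 := by
  have htri : ∀ i j : Fin M, j < i → matH M 0 i j = 0 := by
    intro i j hij
    rw [matH, Matrix.of_apply, hz, if_pos]
    have : (j : ℕ) < (i : ℕ) := hij
    omega
  rw [Matrix.det_of_upperTriangular htri]
  refine Finset.prod_eq_one fun i _ => ?_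
  rw [matH, Matrix.of_apply, hz, if_neg (by omega)]
  norm_num

lemma det_matH (M L : ℕ) (hM : 0 < M) :
    (matH M L).det = (∏ i, (X i : MvPolynomial (Fin M) ℚ))^L := by
  induction L with
  | zero => rw [det_matH_zero]; rfl
  | succ L ih =>
    rw [← matH_mul_matS, Matrix.det_mul, ih, det_matS M hM, pow_succ]


end JacobiTrudiAux

/-- Jacobi–Trudi for a rectangle: In `ℚ[X_1,…,X_M]`, with `h_d` the complete
homogeneous symmetric polynomial of degree `d` for `d ≥ 0` and `h_d = 0` for `d < 0`, the
determinant of the `M×M` matrix with `(a,b)` entry `h_{L+b−a}` equals `(X_1⋯X_M)^L`. -/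
theorem stmt14 (L M : ℕ) (hL : 0 < L) (hM : 0 < M) :
    Matrix.det (Matrix.of fun a b : Fin M =>
      if ((L : ℤ) + (b : ℤ) - (a : ℤ)) < 0 then (0 : MvPolynomial (Fin M) ℚ)
      else MvPolynomial.hsymm (Fin M) ℚ ((L : ℤ) + (b : ℤ) - (a : ℤ)).toNat)
    = (∏ i, MvPolynomial.X i) ^ L := by
  have : (Matrix.of fun a b : Fin M =>
      if ((L : ℤ) + (b : ℤ) - (a : ℤ)) < 0 then (0 : MvPolynomial (Fin M) ℚ)
      else MvPolynomial.hsymm (Fin M) ℚ ((L : ℤ) + (b : ℤ) - (a : ℤ)).toNat) = matH M L := rfl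
  rw [this, det_matH M L hM]
end
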